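/- arXiv:1403.7733 — 2 statements merged into one kernel-verified Lean document; each statement's English description precedes it below -/
import Mathlib

section
/- Suppose a signed graph Ω on underlying graph Γ is obtained from a graph H by a consecutive twisting with k parts, where G is 2-connected and M(G) = L(Ω). Then every cycle of H has connected edge set in Γ if and only if (k is odd, or) for some i ∈ [k] there is no path connecting x_i and y_i in H_i \ z_i when k is even. -/
/-- A multigraph on vertex type `V` with edge type `E`: each edge has an
unordered pair of endpoints (possibly equal, giving a loop). -/
structure Multigraph (V E : Type) where
  ends : E → Sym2 V

namespace Multigraph

variable {V E : Type} [Fintype V] [DecidableEq V] [Fintype E] [DecidableEq E]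

/-- The vertices incident with some edge of `C`. -/
def vertsOf (G : Multigraph V E) (C : Finset E) : Finset V :=
  Finset.univ.filter fun v => ∃ e ∈ C, v ∈ G.ends e

/-- Degree of `v` in the subgraph with edge set `C`; loops count twice. -/
def deg (G : Multigraph V E) (C : Finset E) (v : V) : ℕ :=
  ∑ e ∈ C, (if G.ends e = Sym2.diag v then 2 else if v ∈ G.ends e then 1 else 0)

/-- Reachability using only edges in `C`. -/
def ReachE (G : Multigraph V E) (C : Finset E) (u w : V) : Prop :=
  Relation.ReflTransGen (fun a b => ∃ e ∈ C, a ∈ G.ends e ∧ b ∈ G.ends e) u w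

/-- The subgraph with edge set `C` is connected. -/
def ConnectedOn (G : Multigraph V E) (C : Finset E) : Prop :=
  ∀ u ∈ G.vertsOf C, ∀ w ∈ G.vertsOf C, G.ReachE C u w

/-- `C` is the edge set of a cycle of `G`. -/
def IsCycle (G : Multigraph V E) (C : Finset E) : Prop :=
  C.Nonempty ∧ G.ConnectedOn C ∧ ∀ v ∈ G.vertsOf C, G.deg C v = 2

/-- `P` is the edge set of a path of `G` from `u` to `w` (of positive length). -/
def IsPath (G : Multigraph V E) (P : Finset E) (u w : V) : Prop :=
  u ≠ w ∧ G.ConnectedOn P ∧ u ∈ G.vertsOf P ∧ w ∈ G.vertsOf P ∧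
    G.deg P u = 1 ∧ G.deg P w = 1 ∧
    ∀ v ∈ G.vertsOf P, v ≠ u → v ≠ w → G.deg P v = 2

/-- Theta data: three internally disjoint `u`–`w` paths. -/
def ThetaData (G : Multigraph V E) (P₁ P₂ P₃ : Finset E) (u w : V) : Prop :=
  G.IsPath P₁ u w ∧ G.IsPath P₂ u w ∧ G.IsPath P₃ u w ∧
    Disjoint P₁ P₂ ∧ Disjoint P₁ P₃ ∧ Disjoint P₂ P₃ ∧
    G.vertsOf P₁ ∩ G.vertsOf P₂ = {u, w} ∧
    G.vertsOf P₁ ∩ G.vertsOf P₃ = {u, w} ∧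
    G.vertsOf P₂ ∩ G.vertsOf P₃ = {u, w}

/-- `T` is the edge set of a theta subgraph of `G`. -/
def IsTheta (G : Multigraph V E) (T : Finset E) : Prop :=
  ∃ u w P₁ P₂ P₃, G.ThetaData P₁ P₂ P₃ u w ∧ T = P₁ ∪ P₂ ∪ P₃

/-- The theta property: no theta subgraph contains exactly two balanced cycles. -/
def ThetaProperty (G : Multigraph V E) (B : Set (Finset E)) : Prop :=
  ∀ u w P₁ P₂ P₃, G.ThetaData P₁ P₂ P₃ u w →
    ¬ ((P₁ ∪ P₂ ∈ B ∧ P₁ ∪ P₃ ∈ B ∧ P₂ ∪ P₃ ∉ B) ∨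
       (P₁ ∪ P₂ ∈ B ∧ P₁ ∪ P₃ ∉ B ∧ P₂ ∪ P₃ ∈ B) ∨
       (P₁ ∪ P₂ ∉ B ∧ P₁ ∪ P₃ ∈ B ∧ P₂ ∪ P₃ ∈ B))

/-- `(G, B)` is a biased graph. -/
def IsBiased (G : Multigraph V E) (B : Set (Finset E)) : Prop :=
  (∀ C ∈ B, G.IsCycle C) ∧ G.ThetaProperty B

/-- A tight handcuff: two edge-disjoint cycles meeting in exactly one vertex. -/
def TightHandcuff (G : Multigraph V E) (C₁ C₂ : Finset E) : Prop :=
  G.IsCycle C₁ ∧ G.IsCycle C₂ ∧ Disjoint C₁ C₂ ∧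
    (G.vertsOf C₁ ∩ G.vertsOf C₂).card = 1

/-- A loose handcuff: two vertex-disjoint cycles joined by a path meeting them
only in its endpoints. -/
def LooseHandcuff (G : Multigraph V E) (C₁ C₂ P : Finset E) : Prop :=
  G.IsCycle C₁ ∧ G.IsCycle C₂ ∧ Disjoint (G.vertsOf C₁) (G.vertsOf C₂) ∧
    Disjoint P C₁ ∧ Disjoint P C₂ ∧
    ∃ u₁ u₂, G.IsPath P u₁ u₂ ∧ u₁ ∈ G.vertsOf C₁ ∧ u₂ ∈ G.vertsOf C₂ ∧
      G.vertsOf P ∩ G.vertsOf C₁ = {u₁} ∧ G.vertsOf P ∩ G.vertsOf C₂ = {u₂}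

/-- Circuits of the frame matroid of the biased graph `(G, B)`. -/
def FrameCircuit (G : Multigraph V E) (B : Set (Finset E)) (C : Finset E) : Prop :=
  (G.IsCycle C ∧ C ∈ B) ∨
  (∃ C₁ C₂, G.TightHandcuff C₁ C₂ ∧ C₁ ∉ B ∧ C₂ ∉ B ∧ C = C₁ ∪ C₂) ∨
  (∃ C₁ C₂ P, G.LooseHandcuff C₁ C₂ P ∧ C₁ ∉ B ∧ C₂ ∉ B ∧ C = C₁ ∪ C₂ ∪ P) ∨
  (G.IsTheta C ∧ ∀ D ⊆ C, G.IsCycle D → D ∉ B)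

/-- The balanced cycles of a signed graph `(G, σ)`. -/
def balancedCycles (G : Multigraph V E) (σ : E → ℤˣ) : Set (Finset E) :=
  {C | G.IsCycle C ∧ ∏ e ∈ C, σ e = 1}

/-- Circuits of the frame matroid of a signed graph. -/
def SFrameCircuit (G : Multigraph V E) (σ : E → ℤˣ) (C : Finset E) : Prop :=
  G.FrameCircuit (G.balancedCycles σ) C

/-- Circuits of the lift matroid of a signed graph. -/
def LiftCircuit (G : Multigraph V E) (σ : E → ℤˣ) (C : Finset E) : Prop :=
  (G.IsCycle C ∧ ∏ e ∈ C, σ e = 1) ∨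
  (∃ C₁ C₂, G.IsCycle C₁ ∧ G.IsCycle C₂ ∧
    (∏ e ∈ C₁, σ e) = -1 ∧ (∏ e ∈ C₂, σ e) = -1 ∧ Disjoint C₁ C₂ ∧
    (G.vertsOf C₁ ∩ G.vertsOf C₂).card ≤ 1 ∧ C = C₁ ∪ C₂)

/-- The sign of edge `e` after switching at the vertex labelling `δ`. -/
def switchSign (G : Multigraph V E) (σ : E → ℤˣ) (δ : V → ℤˣ) (e : E) : ℤˣ :=
  Sym2.lift ⟨fun a b => δ a * δ b, fun a b => mul_comm _ _⟩ (G.ends e) * σ e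

/-- Reachability avoiding the vertex set `X`. -/
def ReachAvoiding (G : Multigraph V E) (X : Set V) (u w : V) : Prop :=
  Relation.ReflTransGen
    (fun a b => a ∉ X ∧ b ∉ X ∧ ∃ e, a ∈ G.ends e ∧ b ∈ G.ends e) u w

/-- `G` is 2-connected. -/
def TwoConnected (G : Multigraph V E) : Prop :=
  3 ≤ Fintype.card V ∧ (∀ u w, G.ReachAvoiding ∅ u w) ∧
    ∀ v u w, u ≠ v → w ≠ v → G.ReachAvoiding {v} u w

/-- `G` is 3-connected. -/
def ThreeConnected (G : Multigraph V E) : Prop :=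
  4 ≤ Fintype.card V ∧ (∀ u w, G.ReachAvoiding ∅ u w) ∧
    (∀ v u w, u ≠ v → w ≠ v → G.ReachAvoiding {v} u w) ∧
    ∀ v v' u w, u ∉ ({v, v'} : Set V) → w ∉ ({v, v'} : Set V) →
      G.ReachAvoiding {v, v'} u w

/-- `v` is a cut-vertex of `G`. -/
def CutVertex (G : Multigraph V E) (v : V) : Prop :=
  ∃ u w, u ≠ v ∧ w ≠ v ∧ G.ReachAvoiding ∅ u w ∧ ¬ G.ReachAvoiding {v} u w

/-- `B` is (the edge set of) a block of `G`: an equivalence class of the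
relation "lying on a common cycle". -/
def IsBlock (G : Multigraph V E) (B : Finset E) : Prop :=
  ∃ e, (B : Set E) = {f | f = e ∨ ∃ C, G.IsCycle C ∧ e ∈ C ∧ f ∈ C}

/-- An end-block: a block containing at most one cut-vertex. -/
def EndBlock (G : Multigraph V E) (B : Finset E) : Prop :=
  G.IsBlock B ∧ ∀ a ∈ G.vertsOf B, ∀ b ∈ G.vertsOf B,
    G.CutVertex a → G.CutVertex b → a = b

end Multigraph

/-- Independence for a set system of circuits. -/
def MIndep {E : Type} (Circuits : Set (Finset E)) (X : Finset E) : Prop :=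
  ∀ C ∈ Circuits, ¬ C ⊆ X

/-- The matroid with the given circuits is connected. -/
def MConnected {E : Type} (Circuits : Set (Finset E)) : Prop :=
  ∀ e f : E, e ≠ f → ∃ C ∈ Circuits, e ∈ C ∧ f ∈ C

/-- The matroid with the given circuits is binary (representable over GF(2)). -/
def MBinary {E : Type} [Fintype E] [DecidableEq E] (Circuits : Set (Finset E)) : Prop :=
  ∃ (n : ℕ) (φ : E → (Fin n → ZMod 2)), ∀ X : Finset E,
    MIndep Circuits X ↔ LinearIndependent (ZMod 2) (fun e : {x // x ∈ X} => φ e.1)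


variable {V E : Type} [Fintype V] [DecidableEq V] [Fintype E] [DecidableEq E]

set_option linter.unusedVariables false
set_option linter.unusedSectionVars false
namespace CTaux
open Multigraph Finset

variable {V E : Type} [Fintype V] [DecidableEq V] [Fintype E] [DecidableEq E]
variable {G : Multigraph V E}

/-- Number of ends of the unordered pair `s` equal to `v`. -/
def endCount (s : Sym2 V) (v : V) : ℕ :=
  Sym2.lift ⟨fun a b => (if a = v then 1 else 0) + (if b = v then 1 else 0),
    by intros; ring⟩ s

lemma endCount_mk (a b v : V) :
    endCount s(a, b) v = (if a = v then 1 else 0) + (if b = v then 1 else 0) := rfl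

lemma degterm_eq (s : Sym2 V) (v : V) :
    (if s = Sym2.diag v then 2 else if v ∈ s then 1 else 0) = endCount s v := by
  induction s using Sym2.inductionOn with
  | hf a b =>
    rw [endCount_mk]
    by_cases ha : a = v <;> by_cases hb : b = v <;>
      simp [Sym2.diag, Sym2.mem_iff, Sym2.eq_iff, ha, hb] <;>
      exact ⟨fun h => ha h.symm, fun h => hb h.symm⟩

lemma deg_eq_sum (C : Finset E) (v : V) :
    G.deg C v = ∑ e ∈ C, endCount (G.ends e) v := by
  unfold Multigraph.deg
  exact Finset.sum_congr rfl fun e _ => degterm_eq _ _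

lemma endCount_le_two (s : Sym2 V) (v : V) : endCount s v ≤ 2 := by
  induction s using Sym2.inductionOn with
  | hf a b => rw [endCount_mk]; split <;> split <;> omega

lemma endCount_pos_iff (s : Sym2 V) (v : V) : 1 ≤ endCount s v ↔ v ∈ s := by
  induction s using Sym2.inductionOn with
  | hf a b =>
    rw [endCount_mk, Sym2.mem_iff]
    constructor
    · intro h
      by_contra hc
      push_neg at hc
      obtain ⟨h1, h2⟩ := hc
      rw [if_neg (fun hh => h1 hh.symm), if_neg (fun hh => h2 hh.symm)] at h
      omega
    · rintro (rfl | rfl) <;> simp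

lemma sum_endCount (s : Sym2 V) : ∑ v, endCount s v = 2 := by
  induction s using Sym2.inductionOn with
  | hf a b =>
    have : ∀ c : V, (∑ v, if c = v then 1 else 0) = 1 := by
      intro c
      rw [Finset.sum_ite_eq]
      simp
    simp only [endCount_mk, Finset.sum_add_distrib, this]

lemma handshake (C : Finset E) : ∑ v, G.deg C v = 2 * C.card := by
  have : ∑ v, G.deg C v = ∑ e ∈ C, ∑ v, endCount (G.ends e) v := by
    rw [Finset.sum_comm]
    exact Finset.sum_congr rfl fun v _ => deg_eq_sum _ _
  rw [this]
  simp [sum_endCount, mul_comm]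

lemma even_card_odd_deg (C : Finset E) :
    Even ((univ.filter (fun v => Odd (G.deg C v))).card) := by
  rw [Nat.even_iff]
  have h1 : (univ.filter (fun v => Odd (G.deg C v))).card % 2
      = (∑ v, G.deg C v) % 2 := by
    rw [Finset.card_filter, Finset.sum_nat_mod,
      Finset.sum_nat_mod (s := univ) (n := 2) (f := fun v => G.deg C v)]
    congr 1
    apply Finset.sum_congr rfl
    intro v _
    rcases Nat.even_or_odd (G.deg C v) with h | h
    · simp [Nat.not_odd_iff_even.mpr h, Nat.even_iff.mp h]
    · simp [h, Nat.odd_iff.mp h]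
  rw [h1, handshake]
  omega

lemma mem_vertsOf {C : Finset E} {v : V} : v ∈ G.vertsOf C ↔ ∃ e ∈ C, v ∈ G.ends e := by
  simp [Multigraph.vertsOf]

lemma two_le_sum {s : Finset E} {g : E → ℕ} {e f : E} (he : e ∈ s) (hf : f ∈ s)
    (hef : e ≠ f) (h1 : 1 ≤ g e) (h2 : 1 ≤ g f) : 2 ≤ ∑ a ∈ s, g a := by
  have hfs : f ∈ s.erase e := Finset.mem_erase.mpr ⟨Ne.symm hef, hf⟩
  calc 2 ≤ g e + g f := by omega
    _ ≤ g e + ∑ a ∈ s.erase e, g a := by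
        have := Finset.single_le_sum (f := g) (fun a _ => Nat.zero_le _) hfs
        omega
    _ = ∑ a ∈ s, g a := Finset.add_sum_erase s g he

lemma deg_pos_of_mem {C : Finset E} {v : V} {e : E} (he : e ∈ C) (hv : v ∈ G.ends e) :
    1 ≤ G.deg C v := by
  rw [deg_eq_sum]
  calc 1 ≤ endCount (G.ends e) v := (endCount_pos_iff _ _).mpr hv
    _ ≤ _ := Finset.single_le_sum (f := fun f => endCount (G.ends f) v)
      (fun a _ => Nat.zero_le _) he

lemma exists_edge_of_deg_pos {C : Finset E} {v : V} (h : 1 ≤ G.deg C v) :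
    ∃ e ∈ C, v ∈ G.ends e := by
  by_contra hc
  push_neg at hc
  rw [deg_eq_sum] at h
  have : ∑ e ∈ C, endCount (G.ends e) v = 0 := by
    apply Finset.sum_eq_zero
    intro e he
    have h2 : ¬ (1 ≤ endCount (G.ends e) v) :=
      fun hpos => hc e he ((endCount_pos_iff _ _).mp hpos)
    omega
  omega

lemma deg_one_unique {C : Finset E} {v : V} (h : G.deg C v = 1) :
    ∃ e ∈ C, v ∈ G.ends e ∧ endCount (G.ends e) v = 1 ∧
      ∀ f ∈ C, v ∈ G.ends f → f = e := by
  obtain ⟨e, he, hv⟩ := exists_edge_of_deg_pos (by omega : 1 ≤ G.deg C v)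
  refine ⟨e, he, hv, ?_, ?_⟩
  · have h1 : 1 ≤ endCount (G.ends e) v := (endCount_pos_iff _ _).mpr hv
    have h2 : endCount (G.ends e) v ≤ ∑ f ∈ C, endCount (G.ends f) v :=
      Finset.single_le_sum (f := fun f => endCount (G.ends f) v)
        (fun a _ => Nat.zero_le _) he
    rw [deg_eq_sum] at h
    omega
  · intro f hf hvf
    by_contra hne
    have h4 := two_le_sum (g := fun f => endCount (G.ends f) v) hf he hne
      ((endCount_pos_iff _ _).mpr hvf) ((endCount_pos_iff _ _).mpr hv)
    have h3 : 2 ≤ ∑ f ∈ C, endCount (G.ends f) v := h4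
    rw [deg_eq_sum] at h
    omega

lemma reachE_step {C : Finset E} {e : E} {a b : V} (he : e ∈ C) (ha : a ∈ G.ends e)
    (hb : b ∈ G.ends e) : G.ReachE C a b :=
  Relation.ReflTransGen.single ⟨e, he, ha, hb⟩

lemma reachE_symm {C : Finset E} {a b : V} (h : G.ReachE C a b) : G.ReachE C b a := by
  have hs : Symmetric (fun a b : V => ∃ e ∈ C, a ∈ G.ends e ∧ b ∈ G.ends e) := by
    rintro u w ⟨e, he, h1, h2⟩; exact ⟨e, he, h2, h1⟩
  exact Std.Symm.symm (r := Relation.ReflTransGen (fun a b : V => ∃ e ∈ C, a ∈ G.ends e ∧ b ∈ G.ends e)) (self := @Relation.ReflTransGen.stdSymm _ _ ⟨hs⟩) _ _ h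

lemma reachE_mono {C D : Finset E} (hCD : C ⊆ D) {a b : V} (h : G.ReachE C a b) :
    G.ReachE D a b := by
  apply Relation.ReflTransGen.mono ?_ _ _ h
  rintro u w ⟨e, he, h1, h2⟩
  exact ⟨e, hCD he, h1, h2⟩

lemma reachE_map {V' : Type} [Fintype V'] [DecidableEq V'] {G' : Multigraph V' E}
    {f : V → V'} (hends : ∀ e, G'.ends e = Sym2.map f (G.ends e)) {C : Finset E}
    {a b : V} (h : G.ReachE C a b) : G'.ReachE C (f a) (f b) := by
  induction h with
  | refl => exact Relation.ReflTransGen.refl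
  | tail _ hstep ih =>
    rename_i c d _
    obtain ⟨e, he, h1, h2⟩ := hstep
    refine ih.tail ⟨e, he, ?_, ?_⟩ <;> rw [hends] <;> rw [Sym2.mem_map]
    · exact ⟨c, h1, rfl⟩
    · exact ⟨d, h2, rfl⟩

lemma deg_map {V' : Type} [Fintype V'] [DecidableEq V'] {G' : Multigraph V' E}
    {f : V → V'} (hends : ∀ e, G'.ends e = Sym2.map f (G.ends e)) (C : Finset E)
    (w : V') :
    G'.deg C w = ∑ v ∈ univ.filter (fun v => f v = w), G.deg C v := by
  have key : ∀ s : Sym2 V, endCount (Sym2.map f s) w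
      = ∑ v ∈ univ.filter (fun v => f v = w), endCount s v := by
    intro s
    induction s using Sym2.inductionOn with
    | hf a b =>
      have hsingle : ∀ c : V, (∑ v ∈ univ.filter (fun v => f v = w),
          if c = v then 1 else 0) = if f c = w then 1 else 0 := by
        intro c
        rw [Finset.sum_ite_eq]
        by_cases h : f c = w <;> simp [h]
      simp only [Sym2.map_pair_eq, endCount_mk, Finset.sum_add_distrib, hsingle]
  rw [deg_eq_sum]
  calc ∑ e ∈ C, endCount (G'.ends e) w
      = ∑ e ∈ C, ∑ v ∈ univ.filter (fun v => f v = w), endCount (G.ends e) v := by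
        exact Finset.sum_congr rfl fun e _ => by rw [hends]; exact key _
    _ = ∑ v ∈ univ.filter (fun v => f v = w), ∑ e ∈ C, endCount (G.ends e) v :=
        Finset.sum_comm
    _ = _ := Finset.sum_congr rfl fun v _ => (deg_eq_sum _ _).symm

end CTaux

namespace CTaux
open Multigraph Finset Fin.CommRing

section Ctx
variable {V E VH VΓ : Type} [Fintype V] [DecidableEq V] [Fintype E] [DecidableEq E]
  [Fintype VH] [DecidableEq VH] [Fintype VΓ] [DecidableEq VΓ] {k' : ℕ}

/-- Bundled hypotheses of the consecutive-twisting setup, with `k = k' + 3`. -/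
structure Hyp (G0 : Multigraph V E) (part : E → Fin (k' + 3)) (τ : V → Fin (k' + 3))
    (x y z : Fin (k' + 3) → V) (H : Multigraph VH E) (fH : V → VH)
    (Γ : Multigraph VΓ E) (fΓ : V → VΓ) : Prop where
  hτ : ∀ e, ∀ u : V, u ∈ G0.ends e → τ u = part e
  hτx : ∀ i, τ (x i) = i
  hτy : ∀ i, τ (y i) = i
  hτz : ∀ i, τ (z i) = i
  hxy : ∀ i, x i ≠ y i
  hxz : ∀ i, x i ≠ z i
  hyz : ∀ i, y i ≠ z i
  hfH : ∀ u u', fH u = fH u' ↔ (u = u' ∨ (∃ i j, u = z i ∧ u' = z j) ∨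
      ∃ i : Fin (k' + 3), (u = y (i - 1) ∧ u' = x i) ∨ (u = x i ∧ u' = y (i - 1)))
  hHends : ∀ e, H.ends e = Sym2.map fH (G0.ends e)
  hfΓ : ∀ u u', fΓ u = fΓ u' ↔ (u = u' ∨ ∃ i : Fin (k' + 3),
      u ∈ ({y (i - 1), z i, x (i + 1)} : Set V) ∧
      u' ∈ ({y (i - 1), z i, x (i + 1)} : Set V))
  hΓends : ∀ e, Γ.ends e = Sym2.map fΓ (G0.ends e)

variable {G0 : Multigraph V E} {part : E → Fin (k' + 3)} {τ : V → Fin (k' + 3)}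
  {x y z : Fin (k' + 3) → V} {H : Multigraph VH E} {fH : V → VH}
  {Γ : Multigraph VΓ E} {fΓ : V → VΓ}
  (S : Hyp G0 part τ x y z H fH Γ fΓ)

include S

lemma x_inj {i j : Fin (k' + 3)} (h : x i = x j) : i = j := by
  rw [← S.hτx i, ← S.hτx j, h]

lemma y_inj {i j : Fin (k' + 3)} (h : y i = y j) : i = j := by
  rw [← S.hτy i, ← S.hτy j, h]

lemma z_inj {i j : Fin (k' + 3)} (h : z i = z j) : i = j := by
  rw [← S.hτz i, ← S.hτz j, h]

lemma xy' {i j : Fin (k' + 3)} : x i ≠ y j := by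
  intro h
  have : i = j := by rw [← S.hτx i, ← S.hτy j, h]
  exact S.hxy j (this ▸ h)

lemma xz' {i j : Fin (k' + 3)} : x i ≠ z j := by
  intro h
  have : i = j := by rw [← S.hτx i, ← S.hτz j, h]
  exact S.hxz j (this ▸ h)

lemma yz' {i j : Fin (k' + 3)} : y i ≠ z j := by
  intro h
  have : i = j := by rw [← S.hτy i, ← S.hτz j, h]
  exact S.hyz j (this ▸ h)

/-- `v` is not one of the distinguished vertices. -/
def NonSpec (x y z : Fin (k' + 3) → V) (v : V) : Prop :=
  ∀ j, v ≠ x j ∧ v ≠ y j ∧ v ≠ z j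

lemma fH_eq_x (u : V) (i : Fin (k' + 3)) :
    fH u = fH (x i) ↔ (u = x i ∨ u = y (i - 1)) := by
  rw [S.hfH]
  constructor
  · rintro (h | ⟨i', j', rfl, h⟩ | ⟨i', ⟨h1, h2⟩ | ⟨h1, h2⟩⟩)
    · exact Or.inl h
    · exact absurd h (xz' S)
    · have := x_inj S h2.symm; subst this; exact Or.inr h1
    · exact absurd h2 (xy' S)
  · rintro (rfl | rfl)
    · exact Or.inl rfl
    · exact Or.inr (Or.inr ⟨i, Or.inl ⟨rfl, rfl⟩⟩)

lemma fH_eq_z (u : V) (i : Fin (k' + 3)) :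
    fH u = fH (z i) ↔ ∃ j, u = z j := by
  rw [S.hfH]
  constructor
  · rintro (h | ⟨i', j', rfl, h⟩ | ⟨i', ⟨h1, h2⟩ | ⟨h1, h2⟩⟩)
    · exact ⟨i, h⟩
    · exact ⟨i', rfl⟩
    · exact absurd h2.symm (xz' S)
    · exact absurd h2 fun hh => (yz' S) hh.symm
  · rintro ⟨j, rfl⟩
    exact Or.inr (Or.inl ⟨j, i, rfl, rfl⟩)

lemma fH_y_x (i : Fin (k' + 3)) : fH (y i) = fH (x (i + 1)) := by
  rw [S.hfH]
  refine Or.inr (Or.inr ⟨i + 1, Or.inl ⟨?_, rfl⟩⟩)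
  rw [add_sub_cancel_right]

lemma fH_eq_ns (u u' : V) (h : NonSpec x y z u') : fH u = fH u' ↔ u = u' := by
  rw [S.hfH]
  constructor
  · rintro (h1 | ⟨i', j', rfl, h1⟩ | ⟨i', ⟨h1, h2⟩ | ⟨h1, h2⟩⟩)
    · exact h1
    · exact absurd h1 (h j').2.2
    · exact absurd h2 (h i').1
    · exact absurd h2 (h (i' - 1)).2.1
  · exact fun h1 => Or.inl h1

lemma fΓ_yz (i : Fin (k' + 3)) : fΓ (y (i - 1)) = fΓ (z i) := by
  rw [S.hfΓ]
  exact Or.inr ⟨i, by simp, by simp⟩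

lemma fΓ_zx (i : Fin (k' + 3)) : fΓ (z i) = fΓ (x (i + 1)) := by
  rw [S.hfΓ]
  exact Or.inr ⟨i, by simp, by simp⟩

lemma fΓ_yx (i : Fin (k' + 3)) : fΓ (y i) = fΓ (x (i + 2)) := by
  have h1 := fΓ_yz S (i + 1)
  have h2 := fΓ_zx S (i + 1)
  rw [add_sub_cancel_right] at h1
  rw [h1, h2]
  ring_nf

lemma fΓ_class {u u' : V} (h : fΓ u = fΓ u') :
    u = u' ∨ ∃ i : Fin (k' + 3), (u = y (i - 1) ∨ u = z i ∨ u = x (i + 1)) ∧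
      (u' = y (i - 1) ∨ u' = z i ∨ u' = x (i + 1)) := by
  rw [S.hfΓ] at h
  rcases h with h | ⟨i, h1, h2⟩
  · exact Or.inl h
  · simp only [Set.mem_insert_iff, Set.mem_singleton_iff] at h1 h2
    exact Or.inr ⟨i, h1, h2⟩

end Ctx
end CTaux

namespace CTaux
open Multigraph Finset Fin.CommRing

section Cyc
variable {V E VH VΓ : Type} [Fintype V] [DecidableEq V] [Fintype E] [DecidableEq E]
  [Fintype VH] [DecidableEq VH] [Fintype VΓ] [DecidableEq VΓ] {k' : ℕ}
variable {G0 : Multigraph V E} {part : E → Fin (k' + 3)} {τ : V → Fin (k' + 3)}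
  {x y z : Fin (k' + 3) → V} {H : Multigraph VH E} {fH : V → VH}
  {Γ : Multigraph VΓ E} {fΓ : V → VΓ}
  (S : Hyp G0 part τ x y z H fH Γ fΓ)
variable {C : Finset E}

include S

lemma reach_tau {a b : V} (h : G0.ReachE C a b) : a = b ∨ τ a = τ b := by
  induction h with
  | refl => exact Or.inl rfl
  | tail _ hstep ih =>
    rename_i c d _
    obtain ⟨e, _, h1, h2⟩ := hstep
    have hcd : τ c = τ d := by rw [S.hτ e c h1, S.hτ e d h2]
    rcases ih with rfl | ih
    · exact Or.inr hcd
    · exact Or.inr (ih.trans hcd)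

lemma vertsH_mem {v : V} (h : 1 ≤ G0.deg C v) : fH v ∈ H.vertsOf C := by
  obtain ⟨e, he, hv⟩ := exists_edge_of_deg_pos h
  rw [mem_vertsOf]
  refine ⟨e, he, ?_⟩
  rw [S.hHends, Sym2.mem_map]
  exact ⟨v, hv, rfl⟩

lemma degH_x (i : Fin (k' + 3)) :
    H.deg C (fH (x i)) = G0.deg C (x i) + G0.deg C (y (i - 1)) := by
  rw [deg_map S.hHends]
  have hfil : univ.filter (fun v => fH v = fH (x i)) = {x i, y (i - 1)} := by
    ext v
    simp only [Finset.mem_filter, Finset.mem_univ, true_and, Finset.mem_insert,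
      Finset.mem_singleton]
    exact fH_eq_x S v i
  rw [hfil, Finset.sum_pair (fun h => (xy' S) h)]

lemma degH_z (i : Fin (k' + 3)) :
    H.deg C (fH (z i)) = ∑ j, G0.deg C (z j) := by
  rw [deg_map S.hHends]
  have hfil : univ.filter (fun v => fH v = fH (z i)) = univ.image z := by
    ext v
    simp only [Finset.mem_filter, Finset.mem_univ, true_and, Finset.mem_image]
    rw [fH_eq_z S v i]
    constructor
    · rintro ⟨j, hj⟩
      exact ⟨j, hj.symm⟩
    · rintro ⟨j, hj⟩
      exact ⟨j, hj.symm⟩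
  rw [hfil, Finset.sum_image (fun a _ b _ h => z_inj S h)]

lemma degH_ns {v : V} (h : NonSpec x y z v) : H.deg C (fH v) = G0.deg C v := by
  rw [deg_map S.hHends]
  have hfil : univ.filter (fun u => fH u = fH v) = {v} := by
    ext u
    simp only [Finset.mem_filter, Finset.mem_univ, true_and, Finset.mem_singleton]
    exact fH_eq_ns S u v h
  rw [hfil, Finset.sum_singleton]

lemma sumW (hC : H.IsCycle C) (i : Fin (k' + 3)) :
    G0.deg C (x i) + G0.deg C (y (i - 1)) = 0 ∨
    G0.deg C (x i) + G0.deg C (y (i - 1)) = 2 := by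
  by_cases h : G0.deg C (x i) + G0.deg C (y (i - 1)) = 0
  · exact Or.inl h
  · right
    have hmem : fH (x i) ∈ H.vertsOf C := by
      rcases Nat.eq_zero_or_pos (G0.deg C (x i)) with h0 | hpos
      · have hy : 1 ≤ G0.deg C (y (i - 1)) := by omega
        have := vertsH_mem S hy
        have heq : fH (y (i - 1)) = fH (x i) := by
          have := fH_y_x S (i - 1)
          rwa [sub_add_cancel] at this
        rwa [heq] at this
      · exact vertsH_mem S hpos
    have := hC.2.2 _ hmem
    rw [degH_x S] at this
    omega

lemma sumZ (hC : H.IsCycle C) :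
    (∑ j, G0.deg C (z j)) = 0 ∨ (∑ j, G0.deg C (z j)) = 2 := by
  by_cases h : (∑ j, G0.deg C (z j)) = 0
  · exact Or.inl h
  · right
    have : ∃ j, 1 ≤ G0.deg C (z j) := by
      by_contra hc
      push_neg at hc
      exact h (Finset.sum_eq_zero fun j _ => by have := hc j; omega)
    obtain ⟨j, hj⟩ := this
    have hmem := vertsH_mem S hj
    have := hC.2.2 _ hmem
    rw [degH_z S j] at this
    exact this

lemma ns02 (hC : H.IsCycle C) {v : V} (h : NonSpec x y z v) :
    G0.deg C v = 0 ∨ G0.deg C v = 2 := by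
  rcases Nat.eq_zero_or_pos (G0.deg C v) with h0 | hpos
  · exact Or.inl h0
  · right
    have := hC.2.2 _ (vertsH_mem S hpos)
    rwa [degH_ns S h] at this

lemma deg_le_two (hC : H.IsCycle C) (v : V) : G0.deg C v ≤ 2 := by
  by_cases hs : NonSpec x y z v
  · rcases ns02 S hC hs with h | h <;> omega
  · unfold NonSpec at hs
    push_neg at hs
    obtain ⟨j, hj⟩ := hs
    by_cases h1 : v = x j
    · subst h1
      have := sumW S hC j
      omega
    by_cases h2 : v = y j
    · subst h2
      have hW := sumW S hC (j + 1)
      rw [add_sub_cancel_right] at hW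
      omega
    have h3 : v = z j := by tauto
    subst h3
    have hZ := sumZ S hC
    have hle : G0.deg C (z j) ≤ ∑ i, G0.deg C (z i) :=
      Finset.single_le_sum (f := fun i => G0.deg C (z i))
        (fun a _ => Nat.zero_le _) (Finset.mem_univ j)
    omega

lemma odd_spec (hC : H.IsCycle C) {v : V} (h : Odd (G0.deg C v)) :
    G0.deg C v = 1 ∧ ∃ j, v = x j ∨ v = y j ∨ v = z j := by
  have hle := deg_le_two S hC v
  have h1 : G0.deg C v = 1 := by
    rcases h with ⟨m, hm⟩; omega
  refine ⟨h1, ?_⟩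
  by_contra hc
  push_neg at hc
  have hns : NonSpec x y z v := fun j =>
    ⟨(hc j).1, (hc j).2.1, (hc j).2.2⟩
  rcases ns02 S hC hns with h0 | h0 <;> omega

lemma deg_filter_part_eq {t : Fin (k' + 3)} {v : V} (h : τ v = t) :
    G0.deg (C.filter (fun e => part e = t)) v = G0.deg C v := by
  rw [deg_eq_sum, deg_eq_sum, Finset.sum_filter]
  apply Finset.sum_congr rfl
  intro e _
  by_cases hv : v ∈ G0.ends e
  · rw [if_pos (by rw [← S.hτ e v hv, h])]
  · have h0 : endCount (G0.ends e) v = 0 :=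
      Nat.eq_zero_of_not_pos (fun hp => hv ((endCount_pos_iff _ _).mp hp))
    rw [h0]; simp

lemma deg_filter_part_ne {t : Fin (k' + 3)} {v : V} (h : τ v ≠ t) :
    G0.deg (C.filter (fun e => part e = t)) v = 0 := by
  rw [deg_eq_sum]
  apply Finset.sum_eq_zero
  intro e he
  rw [Finset.mem_filter] at he
  by_cases hv : v ∈ G0.ends e
  · exact absurd (by rw [S.hτ e v hv, he.2]) h
  · exact Nat.eq_zero_of_not_pos (fun hp => hv ((endCount_pos_iff _ _).mp hp))

/-- In a cycle of `H`, the three distinguished vertices of a part cannot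
all have odd degree (handshake within the part). -/
lemma not_three_odd (hC : H.IsCycle C) (t : Fin (k' + 3)) :
    ¬ (Odd (G0.deg C (x t)) ∧ Odd (G0.deg C (y t)) ∧ Odd (G0.deg C (z t))) := by
  rintro ⟨hx, hy, hz⟩
  set D := C.filter (fun e => part e = t) with hD
  have hOdd : univ.filter (fun v => Odd (G0.deg D v)) = {x t, y t, z t} := by
    ext v
    simp only [Finset.mem_filter, Finset.mem_univ, true_and, Finset.mem_insert,
      Finset.mem_singleton]
    constructor
    · intro hv
      by_cases ht : τ v = t
      · have hdeq : G0.deg D v = G0.deg C v := deg_filter_part_eq S ht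
        rw [hdeq] at hv
        obtain ⟨_, j, hj⟩ := odd_spec S hC hv
        rcases hj with rfl | rfl | rfl
        · rw [S.hτx] at ht; subst ht; exact Or.inl rfl
        · rw [S.hτy] at ht; subst ht; exact Or.inr (Or.inl rfl)
        · rw [S.hτz] at ht; subst ht; exact Or.inr (Or.inr rfl)
      · rw [deg_filter_part_ne S ht] at hv
        simp at hv
    · rintro (rfl | rfl | rfl)
      · rwa [deg_filter_part_eq S (S.hτx t)]
      · rwa [deg_filter_part_eq S (S.hτy t)]
      · rwa [deg_filter_part_eq S (S.hτz t)]
  have heven := even_card_odd_deg (G := G0) D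
  rw [hOdd] at heven
  have hcard : ({x t, y t, z t} : Finset V).card = 3 := by
    rw [Finset.card_insert_of_notMem, Finset.card_insert_of_notMem,
      Finset.card_singleton]
    · simp only [Finset.mem_singleton]
      exact S.hyz t
    · simp only [Finset.mem_insert, Finset.mem_singleton]
      push_neg
      exact ⟨S.hxy t, S.hxz t⟩
  rw [hcard] at heven
  have h3 := Nat.even_iff.mp heven
  omega

end Cyc
end CTaux

namespace CTaux
open Multigraph Finset Fin.CommRing

section Comp
variable {V E VH VΓ : Type} [Fintype V] [DecidableEq V] [Fintype E] [DecidableEq E]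
  [Fintype VH] [DecidableEq VH] [Fintype VΓ] [DecidableEq VΓ] {k' : ℕ}
variable {G0 : Multigraph V E} {part : E → Fin (k' + 3)} {τ : V → Fin (k' + 3)}
  {x y z : Fin (k' + 3) → V} {H : Multigraph VH E} {fH : V → VH}
  {Γ : Multigraph VΓ E} {fΓ : V → VΓ}
  (S : Hyp G0 part τ x y z H fH Γ fΓ)
variable {C : Finset E}

/-- The edge set of the `G0`-component of `v0` inside `C`. -/
noncomputable def Kcomp (G0 : Multigraph V E) (C : Finset E) (v0 : V) : Finset E :=
  @Finset.filter _ (fun e => ∃ a ∈ G0.ends e, G0.ReachE C v0 a)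
    (Classical.decPred _) C

lemma mem_Kcomp {v0 : V} {e : E} :
    e ∈ Kcomp G0 C v0 ↔ e ∈ C ∧ ∃ a ∈ G0.ends e, G0.ReachE C v0 a := by
  unfold Kcomp
  exact @Finset.mem_filter _ _ (Classical.decPred _) _ _

lemma reach_of_memK {v0 : V} {e : E} {a : V} (hK : e ∈ Kcomp G0 C v0)
    (ha : a ∈ G0.ends e) : G0.ReachE C v0 a := by
  obtain ⟨heC, b, hb, hr⟩ := mem_Kcomp.mp hK
  exact hr.trans (reachE_step heC hb ha)

lemma deg_Kcomp_eq {v0 w : V} (h : G0.ReachE C v0 w) :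
    G0.deg (Kcomp G0 C v0) w = G0.deg C w := by
  rw [deg_eq_sum, deg_eq_sum]
  unfold Kcomp
  rw [Finset.sum_filter]
  apply Finset.sum_congr rfl
  intro e heC
  by_cases hw : w ∈ G0.ends e
  · rw [if_pos ⟨w, hw, h⟩]
  · have h0 : endCount (G0.ends e) w = 0 :=
      Nat.eq_zero_of_not_pos (fun hp => hw ((endCount_pos_iff _ _).mp hp))
    rw [h0]; simp

lemma deg_Kcomp_zero {v0 w : V} (h : ¬ G0.ReachE C v0 w) :
    G0.deg (Kcomp G0 C v0) w = 0 := by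
  rw [deg_eq_sum]
  apply Finset.sum_eq_zero
  intro e he
  by_cases hw : w ∈ G0.ends e
  · exact absurd (reach_of_memK he hw) h
  · exact Nat.eq_zero_of_not_pos (fun hp => hw ((endCount_pos_iff _ _).mp hp))

lemma odd_deg_Kcomp {v0 w : V} (h : Odd (G0.deg (Kcomp G0 C v0) w)) :
    G0.ReachE C v0 w ∧ Odd (G0.deg C w) := by
  by_cases hr : G0.ReachE C v0 w
  · exact ⟨hr, by rwa [deg_Kcomp_eq hr] at h⟩
  · rw [deg_Kcomp_zero hr] at h
    simp at h

include S

lemma partner_exists (hC : H.IsCycle C) {v : V} (hv : G0.deg C v = 1) :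
    ∃ w, w ≠ v ∧ G0.deg C w = 1 ∧ G0.ReachE C v w ∧
      (∃ j, w = x j ∨ w = y j ∨ w = z j) ∧ τ w = τ v := by
  set K := Kcomp G0 C v with hK
  set O := univ.filter (fun w => Odd (G0.deg K w)) with hO
  have hvO : v ∈ O := by
    rw [hO, Finset.mem_filter]
    refine ⟨Finset.mem_univ v, ?_⟩
    rw [hK, deg_Kcomp_eq Relation.ReflTransGen.refl, hv]
    exact odd_one
  have heven := even_card_odd_deg (G := G0) K
  have hcard2 : 1 < O.card := by
    have h1 : 1 ≤ O.card := Finset.card_pos.mpr ⟨v, hvO⟩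
    obtain ⟨m, hm⟩ := heven
    have : O.card = m + m := hm
    omega
  obtain ⟨w, hwO, hwv⟩ := Finset.exists_mem_ne hcard2 v
  rw [hO, Finset.mem_filter] at hwO
  obtain ⟨hr, hodd⟩ := odd_deg_Kcomp hwO.2
  obtain ⟨hdeg1, hspec⟩ := odd_spec S hC hodd
  have htau : τ w = τ v := by
    rcases reach_tau S hr with h | h
    · exact absurd h.symm hwv
    · exact h.symm
  exact ⟨w, hwv, hdeg1, hr, hspec, htau⟩

lemma partner_unique (hC : H.IsCycle C) {v w1 w2 : V} (hv : G0.deg C v = 1)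
    (h1 : w1 ≠ v ∧ G0.deg C w1 = 1 ∧ G0.ReachE C v w1)
    (h2 : w2 ≠ v ∧ G0.deg C w2 = 1 ∧ G0.ReachE C v w2) : w1 = w2 := by
  by_contra hne
  set K := Kcomp G0 C v with hK
  set O := univ.filter (fun w => Odd (G0.deg K w)) with hO
  set t := τ v with ht
  have hmemO : ∀ u : V, G0.ReachE C v u → G0.deg C u = 1 → u ∈ O := by
    intro u hru hdu
    rw [hO, Finset.mem_filter]
    refine ⟨Finset.mem_univ u, ?_⟩
    rw [hK, deg_Kcomp_eq hru, hdu]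
    exact odd_one
  have hvO : v ∈ O := hmemO v Relation.ReflTransGen.refl hv
  have h1O : w1 ∈ O := hmemO w1 h1.2.2 h1.2.1
  have h2O : w2 ∈ O := hmemO w2 h2.2.2 h2.2.1
  have hsub : O ⊆ ({x t, y t, z t} : Finset V) := by
    intro u hu
    rw [hO, Finset.mem_filter] at hu
    obtain ⟨hr, hodd⟩ := odd_deg_Kcomp hu.2
    obtain ⟨hd1, j, hj⟩ := odd_spec S hC hodd
    have htj : τ u = t := by
      rcases reach_tau S hr with h | h
      · rw [← h, ht]
      · rw [← h, ht]
    simp only [Finset.mem_insert, Finset.mem_singleton]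
    rcases hj with rfl | rfl | rfl
    · rw [S.hτx] at htj; subst htj; exact Or.inl rfl
    · rw [S.hτy] at htj; subst htj; exact Or.inr (Or.inl rfl)
    · rw [S.hτz] at htj; subst htj; exact Or.inr (Or.inr rfl)
  have hub : O.card ≤ 3 := by
    calc O.card ≤ ({x t, y t, z t} : Finset V).card := Finset.card_le_card hsub
      _ ≤ 2 + ({z t} : Finset V).card := by
          calc ({x t, y t, z t} : Finset V).card
              ≤ ({y t, z t} : Finset V).card + 1 := Finset.card_insert_le _ _
            _ ≤ (({z t} : Finset V).card + 1) + 1 := by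
                have := Finset.card_insert_le (y t) ({z t} : Finset V)
                omega
            _ = 2 + ({z t} : Finset V).card := by omega
      _ = 3 := by rw [Finset.card_singleton]
  have hlb : 3 ≤ O.card := by
    have hsub2 : ({v, w1, w2} : Finset V) ⊆ O := by
      intro u hu
      simp only [Finset.mem_insert, Finset.mem_singleton] at hu
      rcases hu with rfl | rfl | rfl
      · exact hvO
      · exact h1O
      · exact h2O
    have hc3 : ({v, w1, w2} : Finset V).card = 3 := by
      rw [Finset.card_insert_of_notMem, Finset.card_insert_of_notMem,
        Finset.card_singleton]
      · simpa using hne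
      · simp only [Finset.mem_insert, Finset.mem_singleton]
        push_neg
        exact ⟨Ne.symm h1.1, Ne.symm h2.1⟩
    calc 3 = ({v, w1, w2} : Finset V).card := hc3.symm
      _ ≤ O.card := Finset.card_le_card hsub2
  have heven := even_card_odd_deg (G := G0) K
  rw [← hO] at heven
  obtain ⟨m, hm⟩ := heven
  omega

/-- B4: if the component of `v0` contains no degree-one vertex, then every
edge of the `H`-cycle `C` lies in it. -/
lemma closed_comp_all (hC : H.IsCycle C) {v0 : V} (hpos : 1 ≤ G0.deg C v0)
    (hno : ∀ w, G0.ReachE C v0 w → G0.deg C w ≠ 1) :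
    ∀ e ∈ C, ∃ a ∈ G0.ends e, G0.ReachE C v0 a := by
  have CL : ∀ u a : V, fH u = fH a → G0.ReachE C v0 u → 1 ≤ G0.deg C u →
      1 ≤ G0.deg C a → a = u := by
    intro u a hfa hru hdu hda
    rcases (S.hfH u a).mp hfa with h | ⟨i, j, rfl, rfl⟩ | ⟨i, ⟨rfl, rfl⟩ | ⟨rfl, rfl⟩⟩
    · exact h.symm
    · by_cases hij : i = j
      · subst hij; rfl
      · exfalso
        have hsum : G0.deg C (z i) + G0.deg C (z j) ≤ ∑ m, G0.deg C (z m) := by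
          have hj : j ∈ univ.erase i :=
            Finset.mem_erase.mpr ⟨Ne.symm hij, Finset.mem_univ j⟩
          have hb1 : G0.deg C (z j) ≤ ∑ m ∈ univ.erase i, G0.deg C (z m) :=
            Finset.single_le_sum (f := fun m => G0.deg C (z m))
              (fun a _ => Nat.zero_le _) hj
          have hb2 : G0.deg C (z i) + ∑ m ∈ univ.erase i, G0.deg C (z m)
              = ∑ m, G0.deg C (z m) :=
            Finset.add_sum_erase univ (fun m => G0.deg C (z m)) (Finset.mem_univ i)
          omega
        rcases sumZ S hC with h0 | h2
        · omega
        · have : G0.deg C (z i) = 1 := by omega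
          exact hno _ hru this
    · -- u = y (i - 1), a = x i
      exfalso
      rcases sumW S hC i with h0 | h2
      · omega
      · have : G0.deg C (y (i - 1)) = 1 := by omega
        exact hno _ hru this
    · -- u = x i, a = y (i - 1)
      exfalso
      rcases sumW S hC i with h0 | h2
      · omega
      · have : G0.deg C (x i) = 1 := by omega
        exact hno _ hru this
  have inv : ∀ hw : VH, H.ReachE C (fH v0) hw →
      ∃ u, fH u = hw ∧ G0.ReachE C v0 u ∧ 1 ≤ G0.deg C u := by
    intro hw hreach
    induction hreach with
    | refl => exact ⟨v0, rfl, Relation.ReflTransGen.refl, hpos⟩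
    | tail _ hstep ih =>
      rename_i c d _
      obtain ⟨e, heC, hc, hd⟩ := hstep
      obtain ⟨u, hu, hru, hdu⟩ := ih
      rw [S.hHends, Sym2.mem_map] at hc hd
      obtain ⟨a, ha, hfa⟩ := hc
      obtain ⟨b, hb, hfb⟩ := hd
      have hda : 1 ≤ G0.deg C a := deg_pos_of_mem heC ha
      have hau : a = u := CL u a (hu.trans hfa.symm) hru hdu hda
      subst hau
      have hrb : G0.ReachE C v0 b := hru.trans (reachE_step heC ha hb)
      exact ⟨b, hfb, hrb, deg_pos_of_mem heC hb⟩
  intro e heC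
  have hex : ∃ a, a ∈ G0.ends e := by
    induction (G0.ends e) using Sym2.inductionOn with
    | hf p q => exact ⟨p, Sym2.mem_mk_left p q⟩
  obtain ⟨a, ha⟩ := hex
  have haV : fH a ∈ H.vertsOf C := by
    rw [mem_vertsOf]
    refine ⟨e, heC, ?_⟩
    rw [S.hHends, Sym2.mem_map]
    exact ⟨a, ha, rfl⟩
  have hreach := hC.2.1 _ (vertsH_mem S hpos) _ haV
  obtain ⟨u, hu, hru, hdu⟩ := inv _ hreach
  have : a = u := CL u a hu hru hdu (deg_pos_of_mem heC ha)
  subst this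
  exact ⟨a, ha, hru⟩

lemma mem_vertsΓ {u : VΓ} :
    u ∈ Γ.vertsOf C ↔ ∃ e ∈ C, ∃ a ∈ G0.ends e, fΓ a = u := by
  rw [mem_vertsOf]
  constructor
  · rintro ⟨e, heC, hu⟩
    rw [S.hΓends, Sym2.mem_map] at hu
    exact ⟨e, heC, hu⟩
  · rintro ⟨e, heC, a, ha, rfl⟩
    refine ⟨e, heC, ?_⟩
    rw [S.hΓends, Sym2.mem_map]
    exact ⟨a, ha, rfl⟩

/-- B5: if every edge is in the component of `v0`, then `C` is `Γ`-connected. -/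
lemma conn_of_all_reach {v0 : V}
    (hall : ∀ e ∈ C, ∃ a ∈ G0.ends e, G0.ReachE C v0 a) : Γ.ConnectedOn C := by
  have key : ∀ u ∈ Γ.vertsOf C, Γ.ReachE C (fΓ v0) u := by
    intro u hu
    obtain ⟨e, heC, a, ha, rfl⟩ := (mem_vertsΓ S).mp hu
    obtain ⟨b, hb, hrb⟩ := hall e heC
    have : G0.ReachE C v0 a := hrb.trans (reachE_step heC hb ha)
    exact reachE_map S.hΓends this
  intro u hu w hw
  exact (reachE_symm (key u hu)).trans (key w hw)

end Comp
end CTaux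

namespace CTaux
open Multigraph Finset Fin.CommRing

section Chain
variable {V E VH VΓ : Type} [Fintype V] [DecidableEq V] [Fintype E] [DecidableEq E]
  [Fintype VH] [DecidableEq VH] [Fintype VΓ] [DecidableEq VΓ] {k' : ℕ}
variable {G0 : Multigraph V E} {part : E → Fin (k' + 3)} {τ : V → Fin (k' + 3)}
  {x y z : Fin (k' + 3) → V} {H : Multigraph VH E} {fH : V → VH}
  {Γ : Multigraph VΓ E} {fΓ : V → VΓ}
  (S : Hyp G0 part τ x y z H fH Γ fΓ)
variable {C : Finset E}

/-- Part `t` carries an `x t`–`y t` path of the cycle. -/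
def AliveP (G0 : Multigraph V E) (C : Finset E) (x y : Fin (k' + 3) → V)
    (t : Fin (k' + 3)) : Prop :=
  G0.deg C (x t) = 1 ∧ G0.deg C (y t) = 1 ∧ G0.ReachE C (x t) (y t)

/-- Part `t` carries an `x t`–`z t` path of the cycle. -/
def HitP (G0 : Multigraph V E) (C : Finset E) (x z : Fin (k' + 3) → V)
    (t : Fin (k' + 3)) : Prop :=
  G0.deg C (x t) = 1 ∧ G0.deg C (z t) = 1 ∧ G0.ReachE C (x t) (z t)

include S

lemma chain_step (hC : H.IsCycle C) {s : Fin (k' + 3)}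
    (hy : G0.deg C (y s) = 1) :
    AliveP G0 C x y (s + 1) ∨ HitP G0 C x z (s + 1) := by
  have hW := sumW S hC (s + 1)
  rw [add_sub_cancel_right] at hW
  have hx1 : G0.deg C (x (s + 1)) = 1 := by omega
  obtain ⟨w, hwne, hw1, hwr, ⟨j, hj⟩, hτw⟩ := partner_exists S hC hx1
  rw [S.hτx] at hτw
  rcases hj with rfl | rfl | rfl
  · rw [S.hτx] at hτw
    exact absurd (congrArg x hτw) hwne
  · rw [S.hτy] at hτw
    subst hτw
    exact Or.inl ⟨hx1, hw1, hwr⟩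
  · rw [S.hτz] at hτw
    subst hτw
    exact Or.inr ⟨hx1, hw1, hwr⟩

lemma chain_main (hC : H.IsCycle C) {s : Fin (k' + 3)}
    (hy : G0.deg C (y s) = 1) (m : ℕ) :
    (∀ m' : ℕ, m' ≤ m → AliveP G0 C x y (s + 1 + (m' : Fin (k' + 3)))) ∨
    (∃ m'' : ℕ, m'' ≤ m ∧ (∀ m' : ℕ, m' < m'' → AliveP G0 C x y (s + 1 + (m' : Fin (k' + 3)))) ∧
      HitP G0 C x z (s + 1 + (m'' : Fin (k' + 3)))) := by
  induction m with
  | zero =>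
    rcases chain_step S hC hy with h | h
    · left
      intro m' hm'
      interval_cases m'
      simpa using h
    · right
      exact ⟨0, le_refl 0, fun m' hm' => absurd hm' (by omega), by simpa using h⟩
  | succ m ih =>
    rcases ih with hall | ⟨m'', hle, ha, hh⟩
    · have hym : G0.deg C (y (s + 1 + (m : Fin (k' + 3)))) = 1 :=
        (hall m le_rfl).2.1
      have hcast : s + 1 + (m : Fin (k' + 3)) + 1 = s + 1 + ((m + 1 : ℕ) : Fin (k' + 3)) := by
        push_cast
        ring
      rcases chain_step S hC hym with h | h
      · left
        intro m' hm'
        rcases Nat.lt_or_ge m' (m + 1) with h1 | h1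
        · exact hall m' (by omega)
        · have : m' = m + 1 := by omega
          subst this
          rwa [← hcast]
      · right
        refine ⟨m + 1, le_refl _, fun m' hm' => hall m' (by omega), ?_⟩
        rwa [← hcast]
    · exact Or.inr ⟨m'', by omega, ha, hh⟩

omit S in
lemma all_alive_all {s : Fin (k' + 3)}
    (hall : ∀ m' : ℕ, m' ≤ k' + 2 → AliveP G0 C x y (s + 1 + (m' : Fin (k' + 3))))
    (t : Fin (k' + 3)) : AliveP G0 C x y t := by
  have hd : ((t - (s + 1)).val : Fin (k' + 3)) = t - (s + 1) := Fin.cast_val_eq_self _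
  have hlt : (t - (s + 1)).val ≤ k' + 2 := by
    have := (t - (s + 1)).isLt
    omega
  have := hall _ hlt
  rwa [hd, add_sub_cancel] at this

omit S in
lemma iter2 (f : Fin (k' + 3) → Prop) (h2 : ∀ t, f t ↔ f (t + 2)) :
    ∀ (m : ℕ) (t : Fin (k' + 3)), f t ↔ f (t + ((2 * m : ℕ) : Fin (k' + 3))) := by
  intro m
  induction m with
  | zero => intro t; simp
  | succ m ih =>
    intro t
    have hcast : t + ((2 * (m + 1) : ℕ) : Fin (k' + 3))
        = (t + ((2 * m : ℕ) : Fin (k' + 3))) + 2 := by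
      push_cast
      ring
    rw [hcast]
    exact (ih t).trans (h2 _)

omit S in
lemma allb (f : Fin (k' + 3) → Prop) (h2 : ∀ t, f t ↔ f (t + 2))
    (c' : Fin (k' + 3)) (hbr : f c' ↔ f (c' + 1)) :
    ∀ t t' : Fin (k' + 3), f t ↔ f t' := by
  have step : ∀ m : ℕ, f c' ↔ f (c' + (m : Fin (k' + 3))) := by
    intro m
    induction m using Nat.strong_induction_on with
    | _ m ih =>
      match m with
      | 0 => simp
      | 1 => simpa using hbr
      | (m + 2) =>
        have hcast : c' + ((m + 2 : ℕ) : Fin (k' + 3))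
            = (c' + (m : Fin (k' + 3))) + 2 := by
          push_cast
          ring
        rw [hcast]
        exact (ih m (by omega)).trans (h2 _)
  have hally : ∀ t : Fin (k' + 3), f c' ↔ f t := by
    intro t
    have hd : ((t - c').val : Fin (k' + 3)) = t - c' := Fin.cast_val_eq_self _
    have := step (t - c').val
    rwa [hd, add_sub_cancel] at this
  intro t t'
  exact (hally t).symm.trans (hally t')

omit S in
lemma exists_double (hodd : ¬ Even (k' + 3)) (d : Fin (k' + 3)) :
    ∃ m : ℕ, ((2 * m : ℕ) : Fin (k' + 3)) = d := by
  have heven : Even (k' + 4) := by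
    rcases Nat.even_or_odd (k' + 3) with h | h
    · exact absurd h hodd
    · rcases h with ⟨m, hm⟩
      exact ⟨m + 1, by omega⟩
  refine ⟨(k' + 4) / 2 * d.val, ?_⟩
  have hdiv : (k' + 4) / 2 * 2 = k' + 4 := by
    obtain ⟨m, hm⟩ := heven
    omega
  have h2m : 2 * ((k' + 4) / 2 * d.val) = (k' + 4) * d.val := by
    calc 2 * ((k' + 4) / 2 * d.val) = ((k' + 4) / 2 * 2) * d.val := by ring
      _ = (k' + 4) * d.val := by rw [hdiv]
  rw [h2m]
  apply Fin.ext
  rw [Fin.val_natCast]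
  have : (k' + 4) * d.val = d.val + (k' + 3) * d.val := by ring
  rw [this, Nat.add_mul_mod_self_left, Nat.mod_eq_of_lt d.isLt]

omit S in
lemma allodd (f : Fin (k' + 3) → Prop) (h2 : ∀ t, f t ↔ f (t + 2))
    (hodd : ¬ Even (k' + 3)) : ∀ t t' : Fin (k' + 3), f t ↔ f t' := by
  intro t t'
  obtain ⟨m, hm⟩ := exists_double hodd (t' - t)
  have := iter2 f h2 m t
  rw [hm, add_sub_cancel] at this
  exact this

lemma colchain (col : V → Prop)
    (colΓ : ∀ a b : V, fΓ a = fΓ b → (col a ↔ col b))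
    (colR : ∀ a b : V, G0.ReachE C a b → (col a ↔ col b)) :
    ∀ (m : ℕ) (s : Fin (k' + 3)),
      (∀ m' : ℕ, m' < m → AliveP G0 C x y (s + 1 + (m' : Fin (k' + 3)))) →
      HitP G0 C x z (s + 1 + (m : Fin (k' + 3))) →
      (col (y s) ↔ col (z (s + 1 + (m : Fin (k' + 3))))) := by
  intro m
  induction m using Nat.strong_induction_on with
  | _ m ih =>
    intro s halive hhit
    match m with
    | 0 =>
      simp only [Nat.cast_zero, add_zero] at hhit ⊢
      apply colΓ
      have := fΓ_yz S (s + 1)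
      rwa [add_sub_cancel_right] at this
    | 1 =>
      have hc1 : s + 1 + ((1 : ℕ) : Fin (k' + 3)) = s + 2 := by
        push_cast
        ring
      rw [hc1] at hhit ⊢
      have e1 : col (y s) ↔ col (x (s + 2)) := colΓ _ _ (fΓ_yx S s)
      exact e1.trans (colR _ _ hhit.2.2)
    | (m + 2) =>
      have hc2 : s + 1 + ((m + 2 : ℕ) : Fin (k' + 3)) = (s + 2) + 1 + (m : Fin (k' + 3)) := by
        push_cast
        ring
      have halive1 : AliveP G0 C x y (s + 2) := by
        have := halive 1 (by omega)
        have hc1 : s + 1 + ((1 : ℕ) : Fin (k' + 3)) = s + 2 := by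
          push_cast
          ring
        rwa [hc1] at this
      have e1 : col (y s) ↔ col (x (s + 2)) := colΓ _ _ (fΓ_yx S s)
      have e2 : col (x (s + 2)) ↔ col (y (s + 2)) := colR _ _ halive1.2.2
      have e3 : col (y (s + 2)) ↔ col (z ((s + 2) + 1 + (m : Fin (k' + 3)))) := by
        apply ih m (by omega) (s + 2)
        · intro m' hm'
          have := halive (m' + 2) (by omega)
          have hc3 : s + 1 + ((m' + 2 : ℕ) : Fin (k' + 3)) = (s + 2) + 1 + (m' : Fin (k' + 3)) := by
            push_cast
            ring
          rwa [hc3] at this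
        · rwa [hc2] at hhit
      rw [hc2]
      exact (e1.trans e2).trans e3

end Chain
end CTaux

namespace CTaux
open Multigraph Finset Fin.CommRing

section Chain2
variable {V E VH VΓ : Type} [Fintype V] [DecidableEq V] [Fintype E] [DecidableEq E]
  [Fintype VH] [DecidableEq VH] [Fintype VΓ] [DecidableEq VΓ] {k' : ℕ}
variable {G0 : Multigraph V E} {part : E → Fin (k' + 3)} {τ : V → Fin (k' + 3)}
  {x y z : Fin (k' + 3) → V} {H : Multigraph VH E} {fH : V → VH}
  {Γ : Multigraph VΓ E} {fΓ : V → VΓ}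
  (S : Hyp G0 part τ x y z H fH Γ fΓ)
variable {C : Finset E}

/-- Part `t` carries a `y t`–`z t` path of the cycle. -/
def BHitP (G0 : Multigraph V E) (C : Finset E) (y z : Fin (k' + 3) → V)
    (t : Fin (k' + 3)) : Prop :=
  G0.deg C (y t) = 1 ∧ G0.deg C (z t) = 1 ∧ G0.ReachE C (y t) (z t)

include S

lemma bchain_step (hC : H.IsCycle C) {s : Fin (k' + 3)}
    (hx : G0.deg C (x s) = 1) :
    AliveP G0 C x y (s - 1) ∨ BHitP G0 C y z (s - 1) := by
  have hW := sumW S hC s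
  have hy1 : G0.deg C (y (s - 1)) = 1 := by omega
  obtain ⟨w, hwne, hw1, hwr, ⟨j, hj⟩, hτw⟩ := partner_exists S hC hy1
  rw [S.hτy] at hτw
  rcases hj with rfl | rfl | rfl
  · rw [S.hτx] at hτw
    subst hτw
    exact Or.inl ⟨hw1, hy1, reachE_symm hwr⟩
  · rw [S.hτy] at hτw
    exact absurd (congrArg y hτw) hwne
  · rw [S.hτz] at hτw
    subst hτw
    exact Or.inr ⟨hy1, hw1, hwr⟩

lemma bchain_main (hC : H.IsCycle C) {s : Fin (k' + 3)}
    (hx : G0.deg C (x s) = 1) (m : ℕ) :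
    (∀ m' : ℕ, m' ≤ m → AliveP G0 C x y (s - 1 - (m' : Fin (k' + 3)))) ∨
    (∃ m'' : ℕ, m'' ≤ m ∧ (∀ m' : ℕ, m' < m'' → AliveP G0 C x y (s - 1 - (m' : Fin (k' + 3)))) ∧
      BHitP G0 C y z (s - 1 - (m'' : Fin (k' + 3)))) := by
  induction m with
  | zero =>
    rcases bchain_step S hC hx with h | h
    · left
      intro m' hm'
      interval_cases m'
      simpa using h
    · right
      exact ⟨0, le_refl 0, fun m' hm' => absurd hm' (by omega), by simpa using h⟩
  | succ m ih =>
    rcases ih with hall | ⟨m'', hle, ha, hh⟩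
    · have hxm : G0.deg C (x (s - 1 - (m : Fin (k' + 3)))) = 1 :=
        (hall m le_rfl).1
      have hcast : s - 1 - (m : Fin (k' + 3)) - 1 = s - 1 - ((m + 1 : ℕ) : Fin (k' + 3)) := by
        push_cast
        ring
      rcases bchain_step S hC hxm with h | h
      · left
        intro m' hm'
        rcases Nat.lt_or_ge m' (m + 1) with h1 | h1
        · exact hall m' (by omega)
        · have : m' = m + 1 := by omega
          subst this
          rwa [← hcast]
      · right
        refine ⟨m + 1, le_refl _, fun m' hm' => hall m' (by omega), ?_⟩
        rwa [← hcast]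
    · exact Or.inr ⟨m'', by omega, ha, hh⟩

omit S in
lemma ball_alive_all {s : Fin (k' + 3)}
    (hall : ∀ m' : ℕ, m' ≤ k' + 2 → AliveP G0 C x y (s - 1 - (m' : Fin (k' + 3))))
    (t : Fin (k' + 3)) : AliveP G0 C x y t := by
  have hd : (((s - 1 - t)).val : Fin (k' + 3)) = s - 1 - t := Fin.cast_val_eq_self _
  have hlt : (s - 1 - t).val ≤ k' + 2 := by
    have := (s - 1 - t).isLt
    omega
  have := hall _ hlt
  rwa [hd, sub_sub_cancel] at this

/-- Convert a reachability within the cycle into the target relation of the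
theorem (edges of part `i`, avoiding `z i`). -/
lemma reach_to_goal {i : Fin (k' + 3)} (hzi : G0.deg C (z i) = 0)
    (h : G0.ReachE C (x i) (y i)) :
    Relation.ReflTransGen
      (fun a b => a ≠ z i ∧ b ≠ z i ∧ ∃ e, part e = i ∧ a ∈ G0.ends e ∧ b ∈ G0.ends e)
      (x i) (y i) := by
  have main : ∀ b : V, G0.ReachE C (x i) b →
      Relation.ReflTransGen
        (fun a b => a ≠ z i ∧ b ≠ z i ∧ ∃ e, part e = i ∧ a ∈ G0.ends e ∧ b ∈ G0.ends e)
        (x i) b ∧ τ b = i := by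
    intro b hb
    induction hb with
    | refl => exact ⟨Relation.ReflTransGen.refl, S.hτx i⟩
    | tail _ hstep ih =>
      rename_i c d _
      obtain ⟨e, heC, hc, hd⟩ := hstep
      obtain ⟨ihwalk, ihτ⟩ := ih
      have hpart : part e = i := by rw [← S.hτ e c hc, ihτ]
      have hcz : c ≠ z i := by
        intro hcz
        subst hcz
        have := deg_pos_of_mem heC hc
        omega
      have hdz : d ≠ z i := by
        intro hdz
        subst hdz
        have := deg_pos_of_mem heC hd
        omega
      refine ⟨ihwalk.tail ⟨hcz, hdz, e, hpart, hc, hd⟩, ?_⟩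
      rw [S.hτ e d hd, hpart]
  exact (main _ h).1

lemma conn_by_color (hC : H.IsCycle C)
    (hkey : ∀ col : V → Prop,
      (∀ a b : V, fΓ a = fΓ b → (col a ↔ col b)) →
      (∀ a b : V, G0.ReachE C a b → (col a ↔ col b)) →
      ∀ v w : V, 1 ≤ G0.deg C v → 1 ≤ G0.deg C w → (col v ↔ col w)) :
    Γ.ConnectedOn C := by
  intro u hu w hw
  by_contra hnr
  obtain ⟨e1, he1, a, ha, rfl⟩ := (mem_vertsΓ S).mp hu
  obtain ⟨e2, he2, b, hb, rfl⟩ := (mem_vertsΓ S).mp hw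
  set col : V → Prop := fun v' => Γ.ReachE C (fΓ v') (fΓ a) with hcol
  have colΓ : ∀ a' b' : V, fΓ a' = fΓ b' → (col a' ↔ col b') := by
    intro a' b' h
    rw [hcol]
    simp only
    rw [h]
  have colR : ∀ a' b' : V, G0.ReachE C a' b' → (col a' ↔ col b') := by
    intro a' b' h
    have h1 : Γ.ReachE C (fΓ a') (fΓ b') := reachE_map S.hΓends h
    constructor
    · intro hc
      exact (reachE_symm h1).trans hc
    · intro hc
      exact h1.trans hc
  have hab := hkey col colΓ colR a b (deg_pos_of_mem he1 ha) (deg_pos_of_mem he2 hb)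
  have hcola : col a := Relation.ReflTransGen.refl
  have hcolb : col b := hab.mp hcola
  exact hnr (reachE_symm hcolb)

end Chain2
end CTaux

namespace CTaux
open Multigraph Finset Fin.CommRing

section PropB
variable {V E VH VΓ : Type} [Fintype V] [DecidableEq V] [Fintype E] [DecidableEq E]
  [Fintype VH] [DecidableEq VH] [Fintype VΓ] [DecidableEq VΓ] {k' : ℕ}
variable {G0 : Multigraph V E} {part : E → Fin (k' + 3)} {τ : V → Fin (k' + 3)}
  {x y z : Fin (k' + 3) → V} {H : Multigraph VH E} {fH : V → VH}
  {Γ : Multigraph VΓ E} {fΓ : V → VΓ}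
  (S : Hyp G0 part τ x y z H fH Γ fΓ)
variable {C : Finset E}

omit S in
lemma exists_mem_sym2 (s : Sym2 V) : ∃ a, a ∈ s := by
  induction s using Sym2.inductionOn with
  | hf p q => exact ⟨p, Sym2.mem_mk_left p q⟩

omit S in
lemma sum_z_bound (t : Fin (k' + 3)) :
    G0.deg C (z t) ≤ ∑ j, G0.deg C (z j) :=
  Finset.single_le_sum (f := fun j => G0.deg C (z j)) (fun a _ => Nat.zero_le _)
    (Finset.mem_univ t)

omit S in
lemma zsum_cases (h2 : ∑ j, G0.deg C (z j) = 2) :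
    (∃ c, G0.deg C (z c) = 2 ∧ ∀ t, t ≠ c → G0.deg C (z t) = 0) ∨
    (∃ c1 c2, c1 ≠ c2 ∧ G0.deg C (z c1) = 1 ∧ G0.deg C (z c2) = 1 ∧
      ∀ t, t ≠ c1 → t ≠ c2 → G0.deg C (z t) = 0) := by
  have hex : ∃ c, 1 ≤ G0.deg C (z c) := by
    by_contra hc
    push_neg at hc
    have : ∑ j, G0.deg C (z j) = 0 :=
      Finset.sum_eq_zero fun j _ => by have := hc j; omega
    omega
  obtain ⟨c, hc⟩ := hex
  have hsplit : G0.deg C (z c) + ∑ j ∈ univ.erase c, G0.deg C (z j)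
      = ∑ j, G0.deg C (z j) :=
    Finset.add_sum_erase univ (fun j => G0.deg C (z j)) (Finset.mem_univ c)
  have hboundE : ∀ t, t ≠ c → G0.deg C (z t) ≤ ∑ j ∈ univ.erase c, G0.deg C (z j) := by
    intro t ht
    exact Finset.single_le_sum (f := fun j => G0.deg C (z j))
      (fun a _ => Nat.zero_le _) (Finset.mem_erase.mpr ⟨ht, Finset.mem_univ t⟩)
  rcases Nat.lt_or_ge (G0.deg C (z c)) 2 with h1 | h1
  · -- deg z c = 1
    have hdc : G0.deg C (z c) = 1 := by omega
    have hrest : ∑ j ∈ univ.erase c, G0.deg C (z j) = 1 := by omega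
    have hex2 : ∃ c2 ∈ univ.erase c, 1 ≤ G0.deg C (z c2) := by
      by_contra hc2
      push_neg at hc2
      have : ∑ j ∈ univ.erase c, G0.deg C (z j) = 0 :=
        Finset.sum_eq_zero fun j hj => by have := hc2 j hj; omega
      omega
    obtain ⟨c2, hc2mem, hc2pos⟩ := hex2
    have hc2ne : c2 ≠ c := (Finset.mem_erase.mp hc2mem).1
    have hsplit2 : G0.deg C (z c2) + ∑ j ∈ (univ.erase c).erase c2, G0.deg C (z j)
        = ∑ j ∈ univ.erase c, G0.deg C (z j) :=
      Finset.add_sum_erase _ (fun j => G0.deg C (z j)) hc2mem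
    have hdc2 : G0.deg C (z c2) = 1 := by
      have := hboundE c2 hc2ne
      omega
    right
    refine ⟨c, c2, Ne.symm hc2ne, hdc, hdc2, ?_⟩
    intro t ht1 ht2
    have htmem : t ∈ (univ.erase c).erase c2 :=
      Finset.mem_erase.mpr ⟨ht2, Finset.mem_erase.mpr ⟨ht1, Finset.mem_univ t⟩⟩
    have hb : G0.deg C (z t) ≤ ∑ j ∈ (univ.erase c).erase c2, G0.deg C (z j) :=
      Finset.single_le_sum (f := fun j => G0.deg C (z j))
        (fun a _ => Nat.zero_le _) htmem
    omega
  · -- deg z c = 2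
    have hdc : G0.deg C (z c) = 2 := by
      have := sum_z_bound (G0 := G0) (C := C) (z := z) c
      omega
    left
    refine ⟨c, hdc, fun t ht => ?_⟩
    have := hboundE t ht
    omega

include S

set_option maxHeartbeats 1000000 in
/-- Main dichotomy: every `H`-cycle is either `Γ`-connected, or `k` is even and
each part carries an `x i`–`y i` path avoiding `z i`. -/
lemma propB (hC : H.IsCycle C) :
    Γ.ConnectedOn C ∨ (Even (k' + 3) ∧ ∀ i : Fin (k' + 3), Relation.ReflTransGen
      (fun a b => a ≠ z i ∧ b ≠ z i ∧ ∃ e, part e = i ∧ a ∈ G0.ends e ∧ b ∈ G0.ends e)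
      (x i) (y i)) := by
  by_cases hclosed : ∃ v0, 1 ≤ G0.deg C v0 ∧ ∀ w, G0.ReachE C v0 w → G0.deg C w ≠ 1
  · obtain ⟨v0, hpos, hno⟩ := hclosed
    exact Or.inl (conn_of_all_reach S (closed_comp_all S hC hpos hno))
  push_neg at hclosed
  have hodd : ∀ v0, 1 ≤ G0.deg C v0 → ∃ w, G0.ReachE C v0 w ∧ G0.deg C w = 1 :=
    hclosed
  obtain ⟨e0, he0⟩ := hC.1
  obtain ⟨a0, ha0⟩ := exists_mem_sym2 (G0.ends e0)
  have ha0deg : 1 ≤ G0.deg C a0 := deg_pos_of_mem he0 ha0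
  rcases sumZ S hC with hz0 | hz2
  · -- no z used
    have hznone : ∀ t, G0.deg C (z t) = 0 := by
      intro t
      have := sum_z_bound (G0 := G0) (C := C) (z := z) t
      omega
    have hstart : ∃ s0, G0.deg C (y s0) = 1 := by
      obtain ⟨w, hrw, hw1⟩ := hodd a0 ha0deg
      obtain ⟨_, j, hj⟩ := odd_spec S hC (by rw [hw1]; exact odd_one)
      rcases hj with rfl | rfl | rfl
      · have hW := sumW S hC j
        exact ⟨j - 1, by omega⟩
      · exact ⟨j, hw1⟩
      · exact absurd hw1 (by rw [hznone]; omega)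
    obtain ⟨s0, hys0⟩ := hstart
    have hallQ : ∀ t, AliveP G0 C x y t := by
      rcases chain_main S hC hys0 (k' + 2) with hall | ⟨m, _, _, hhit⟩
      · exact all_alive_all hall
      · exact absurd hhit.2.1 (by rw [hznone]; omega)
    by_cases heven : Even (k' + 3)
    · exact Or.inr ⟨heven, fun i => reach_to_goal S (hznone i) (hallQ i).2.2⟩
    · left
      apply conn_by_color S hC
      intro col colΓ colR
      have h2 : ∀ t, col (x t) ↔ col (x (t + 2)) := fun t =>
        (colR _ _ (hallQ t).2.2).trans (colΓ _ _ (fΓ_yx S t))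
      have hallcol := allodd (fun t => col (x t)) h2 heven
      have hcolv : ∀ v, 1 ≤ G0.deg C v → (col v ↔ col (x 0)) := by
        intro v hv
        obtain ⟨w, hrw, hw1⟩ := hodd v hv
        obtain ⟨_, j, hj⟩ := odd_spec S hC (by rw [hw1]; exact odd_one)
        have e0' : col v ↔ col w := colR _ _ hrw
        rcases hj with rfl | rfl | rfl
        · exact e0'.trans (hallcol j 0)
        · exact e0'.trans ((colΓ _ _ (fΓ_yx S j)).trans (hallcol (j + 2) 0))
        · exact absurd hw1 (by rw [hznone]; omega)
      intro v w hv hw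
      exact (hcolv v hv).trans (hcolv w hw).symm
  · -- z used, total degree two on the z class
    rcases zsum_cases (G0 := G0) hz2 with ⟨c, hc2, hoth⟩ | ⟨c1, c2, hcne, h11, h12, hoth⟩
    · -- one z of degree two: always connected
      left
      apply conn_by_color S hC
      intro col colΓ colR
      obtain ⟨w, hrw, hw1⟩ := hodd (z c) (by omega)
      obtain ⟨_, j, hj⟩ := odd_spec S hC (by rw [hw1]; exact odd_one)
      have hτw : τ w = c := by
        rcases reach_tau S hrw with h | h
        · rw [← h] at hw1; omega
        · rw [← h, S.hτz]
      have hnohit : ∀ t, ¬ HitP G0 C x z t := by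
        intro t ht
        by_cases htc : t = c
        · subst htc
          have := ht.2.1
          omega
        · have := hoth t htc
          have := ht.2.1
          omega
      have hallQfrom : ∀ s0, G0.deg C (y s0) = 1 → ∀ t, AliveP G0 C x y t := by
        intro s0 hys0
        rcases chain_main S hC hys0 (k' + 2) with hall | ⟨m, _, _, hhit⟩
        · exact all_alive_all hall
        · exact absurd hhit (hnohit _)
      have hbridge : ∃ c' : Fin (k' + 3), (∀ t, AliveP G0 C x y t) ∧
          (col (x c') ↔ col (x (c' + 1))) := by
        rcases hj with hj | hj | hj
        · -- w = x j
          have hjc : j = c := by rw [hj, S.hτx] at hτw; exact hτw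
          have hw : w = x c := by rw [hj, hjc]
          rw [hw] at hrw hw1
          have hW := sumW S hC c
          have hyc : G0.deg C (y (c - 1)) = 1 := by omega
          refine ⟨c, hallQfrom _ hyc, ?_⟩
          exact (colR _ _ hrw).symm.trans (colΓ _ _ (fΓ_zx S c))
        · -- w = y j
          have hjc : j = c := by rw [hj, S.hτy] at hτw; exact hτw
          have hw : w = y c := by rw [hj, hjc]
          rw [hw] at hrw hw1
          refine ⟨c + 1, hallQfrom _ hw1, ?_⟩
          have e1 : col (x (c + 1)) ↔ col (z c) := (colΓ _ _ (fΓ_zx S c)).symm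
          have e2 : col (z c) ↔ col (y c) := colR _ _ hrw
          have e3 : col (y c) ↔ col (x (c + 2)) := colΓ _ _ (fΓ_yx S c)
          have hc2' : c + 2 = (c + 1) + 1 := by ring
          rw [← hc2']
          exact e1.trans (e2.trans e3)
        · -- w = z j : impossible
          have hjc : j = c := by rw [hj, S.hτz] at hτw; exact hτw
          have hw : w = z c := by rw [hj, hjc]
          rw [hw] at hw1
          omega
      obtain ⟨c', hallQ, hbr⟩ := hbridge
      have h2 : ∀ t, col (x t) ↔ col (x (t + 2)) := fun t =>
        (colR _ _ (hallQ t).2.2).trans (colΓ _ _ (fΓ_yx S t))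
      have hallcol := allb (fun t => col (x t)) h2 c' hbr
      have hcolv : ∀ v, 1 ≤ G0.deg C v → (col v ↔ col (x 0)) := by
        intro v hv
        obtain ⟨w', hrw', hw1'⟩ := hodd v hv
        obtain ⟨_, j, hj'⟩ := odd_spec S hC (by rw [hw1']; exact odd_one)
        have e0' : col v ↔ col w' := colR _ _ hrw'
        rcases hj' with rfl | rfl | rfl
        · exact e0'.trans (hallcol j 0)
        · exact e0'.trans ((colΓ _ _ (fΓ_yx S j)).trans (hallcol (j + 2) 0))
        · exfalso
          by_cases hjc : j = c
          · subst hjc; omega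
          · have := hoth j hjc; omega
      intro v w' hv hw'
      exact (hcolv v hv).trans (hcolv w' hw').symm
    · -- two z's of degree one: always connected
      left
      apply conn_by_color S hC
      intro col colΓ colR
      have hnoall : (∀ t, AliveP G0 C x y t) → False := by
        intro hQ
        exact not_three_odd S hC c1
          ⟨by rw [(hQ c1).1]; exact odd_one,
           by rw [(hQ c1).2.1]; exact odd_one,
           by rw [h11]; exact odd_one⟩
      have hz1 : ∀ t, G0.deg C (z t) = 1 → t = c1 ∨ t = c2 := by
        intro t h
        by_cases h1 : t = c1
        · exact Or.inl h1
        by_cases h2' : t = c2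
        · exact Or.inr h2'
        have := hoth t h1 h2'
        omega
      have htie : ∀ s, G0.deg C (y s) = 1 →
          ((col (y s) ↔ col (z c1)) ∨ (col (y s) ↔ col (z c2))) := by
        intro s hys
        rcases chain_main S hC hys (k' + 2) with hall | ⟨m, _, halive, hhit⟩
        · exact absurd (all_alive_all hall) hnoall
        · have hcc := colchain S col colΓ colR m s halive hhit
          rcases hz1 _ hhit.2.1 with h | h
          · rw [h] at hcc; exact Or.inl hcc
          · rw [h] at hcc; exact Or.inr hcc
      -- partner of z c1
      obtain ⟨w1, hw1ne, hw11, hr1, ⟨j1, hj1⟩, hτ1⟩ := partner_exists S hC h11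
      rw [S.hτz] at hτ1
      -- partner of z c2
      obtain ⟨w2, hw2ne, hw21, hr2, ⟨j2, hj2⟩, hτ2⟩ := partner_exists S hC h12
      rw [S.hτz] at hτ2
      -- main bridging lemma between the two z's
      have hBmain : ∀ cr co : Fin (k' + 3), G0.deg C (z cr) = 1 →
          G0.deg C (z co) = 1 →
          (∀ t, G0.deg C (z t) = 1 → t = cr ∨ t = co) →
          G0.deg C (y cr) = 1 → G0.ReachE C (z cr) (y cr) →
          (col (z cr) ↔ col (z co)) := by
        intro cr co hzcr hzco hcl hycr hrcr
        rcases chain_main S hC hycr (k' + 2) with hall | ⟨m, _, halive, hhit⟩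
        · exfalso
          apply not_three_odd S hC cr
          have hQ := all_alive_all hall
          exact ⟨by rw [(hQ cr).1]; exact odd_one,
            by rw [(hQ cr).2.1]; exact odd_one,
            by rw [hzcr]; exact odd_one⟩
        · have hcc := colchain S col colΓ colR m cr halive hhit
          rcases hcl _ hhit.2.1 with h | h
          · exfalso
            rw [h] at hhit
            have huni := partner_unique S hC hzcr
              ⟨fun hh => S.hyz cr hh, hycr, hrcr⟩
              ⟨fun hh => S.hxz cr hh, hhit.1, reachE_symm hhit.2.2⟩
            exact xy' S huni.symm
          · rw [h] at hcc
            exact (colR _ _ hrcr).trans hcc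
      -- establish col (z c1) ↔ col (z c2)
      have hB : col (z c1) ↔ col (z c2) := by
        rcases hj1 with hj1 | hj1 | hj1
        · -- w1 = x j1, so j1 = c1, w1 = x c1
          have hjc : j1 = c1 := by rw [hj1, S.hτx] at hτ1; exact hτ1
          have hw1e : w1 = x c1 := by rw [hj1, hjc]
          rw [hw1e] at hr1 hw11 hw1ne
          rcases hj2 with hj2 | hj2 | hj2
          · -- w2 = x c2 : impossible, backward chain
            have hjc2 : j2 = c2 := by rw [hj2, S.hτx] at hτ2; exact hτ2
            have hw2e : w2 = x c2 := by rw [hj2, hjc2]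
            rw [hw2e] at hr2 hw21 hw2ne
            exfalso
            rcases bchain_main S hC hw11 (k' + 2) with hall | ⟨m, _, _, hbhit⟩
            · exact hnoall (ball_alive_all hall)
            · rcases hz1 _ hbhit.2.1 with h | h
              · rw [h] at hbhit
                have huni := partner_unique S hC h11
                  ⟨fun hh => S.hxz c1 hh, hw11, hr1⟩
                  ⟨fun hh => S.hyz c1 hh, hbhit.1, reachE_symm hbhit.2.2⟩
                exact xy' S huni
              · rw [h] at hbhit
                have huni := partner_unique S hC h12
                  ⟨fun hh => S.hxz c2 hh, hw21, hr2⟩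
                  ⟨fun hh => S.hyz c2 hh, hbhit.1, reachE_symm hbhit.2.2⟩
                exact xy' S huni
          · -- w2 = y c2
            have hjc2 : j2 = c2 := by rw [hj2, S.hτy] at hτ2; exact hτ2
            have hw2e : w2 = y c2 := by rw [hj2, hjc2]
            rw [hw2e] at hr2 hw21
            exact (hBmain c2 c1 h12 h11
              (fun t ht => (hz1 t ht).symm) hw21 hr2).symm
          · -- w2 = z c2 : impossible
            have hjc2 : j2 = c2 := by rw [hj2, S.hτz] at hτ2; exact hτ2
            have hw2e : w2 = z c2 := by rw [hj2, hjc2]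
            rw [hw2e] at hw2ne
            exact absurd rfl hw2ne
        · -- w1 = y c1
          have hjc : j1 = c1 := by rw [hj1, S.hτy] at hτ1; exact hτ1
          have hw1e : w1 = y c1 := by rw [hj1, hjc]
          rw [hw1e] at hr1 hw11
          exact hBmain c1 c2 h11 h12 hz1 hw11 hr1
        · -- w1 = z c1 : impossible
          have hjc : j1 = c1 := by rw [hj1, S.hτz] at hτ1; exact hτ1
          have hw1e : w1 = z c1 := by rw [hj1, hjc]
          rw [hw1e] at hw1ne
          exact absurd rfl hw1ne
      have hzanchor : ∀ t, G0.deg C (z t) = 1 → (col (z t) ↔ col (z c1)) := by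
        intro t ht
        rcases hz1 t ht with rfl | rfl
        · exact Iff.rfl
        · exact hB.symm
      have hytie : ∀ s, G0.deg C (y s) = 1 → (col (y s) ↔ col (z c1)) := by
        intro s hys
        rcases htie s hys with h | h
        · exact h
        · exact h.trans hB.symm
      have hcolv : ∀ v, 1 ≤ G0.deg C v → (col v ↔ col (z c1)) := by
        intro v hv
        obtain ⟨w, hrw, hw1⟩ := hodd v hv
        obtain ⟨_, j, hj⟩ := odd_spec S hC (by rw [hw1]; exact odd_one)
        have e0' : col v ↔ col w := colR _ _ hrw
        rcases hj with rfl | rfl | rfl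
        · -- w = x j
          have hW := sumW S hC j
          have hyj1 : G0.deg C (y (j - 1)) = 1 := by omega
          rcases chain_main S hC hyj1 (k' + 2) with hall | ⟨m, _, halive, hhit⟩
          · exact absurd (all_alive_all hall) hnoall
          · match m with
            | 0 =>
              have hcast : j - 1 + 1 + ((0 : ℕ) : Fin (k' + 3)) = j := by
                push_cast
                ring
              rw [hcast] at hhit
              exact e0'.trans ((colR _ _ hhit.2.2).trans (hzanchor j hhit.2.1))
            | (m + 1) =>
              have hcast : j - 1 + 1 + ((0 : ℕ) : Fin (k' + 3)) = j := by
                push_cast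
                ring
              have halj := halive 0 (by omega)
              rw [hcast] at halj
              have e1 : col (x j) ↔ col (y j) := colR _ _ halj.2.2
              exact e0'.trans (e1.trans (hytie j halj.2.1))
        · -- w = y j
          exact e0'.trans (hytie j hw1)
        · -- w = z j
          exact e0'.trans (hzanchor j hw1)
      intro v w hv hw
      exact (hcolv v hv).trans (hcolv w hw).symm

end PropB
end CTaux

namespace CTaux
open Multigraph Finset Fin.CommRing

section PathA
variable {V E : Type} [Fintype V] [DecidableEq V] [Fintype E] [DecidableEq E]
variable {G : Multigraph V E}

lemma verts_iff_deg {P : Finset E} {v : V} :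
    v ∈ G.vertsOf P ↔ 1 ≤ G.deg P v := by
  rw [mem_vertsOf]
  constructor
  · rintro ⟨e, he, hv⟩
    exact deg_pos_of_mem he hv
  · exact exists_edge_of_deg_pos

lemma deg_erase {P : Finset E} {e : E} (he : e ∈ P) (v : V) :
    G.deg P v = G.deg (P.erase e) v + endCount (G.ends e) v := by
  rw [deg_eq_sum, deg_eq_sum, add_comm]
  exact (Finset.add_sum_erase P (fun f => endCount (G.ends f) v) he).symm

lemma sym2_mem_exists {s : Sym2 V} {a : V} (h : a ∈ s) : ∃ b, s = s(a, b) := by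
  induction s using Sym2.inductionOn with
  | hf p q =>
    rw [Sym2.mem_iff] at h
    rcases h with rfl | rfl
    · exact ⟨q, rfl⟩
    · exact ⟨p, Sym2.eq_swap⟩

lemma sym2_eq_of_two_mem {s : Sym2 V} {a b : V} (hab : a ≠ b) (ha : a ∈ s)
    (hb : b ∈ s) : s = s(a, b) := by
  induction s using Sym2.inductionOn with
  | hf p q =>
    rw [Sym2.mem_iff] at ha hb
    rcases ha with rfl | rfl <;> rcases hb with rfl | rfl
    · exact absurd rfl hab
    · rfl
    · exact Sym2.eq_swap
    · exact absurd rfl hab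

/-- A (simple) path with edge set `P` from `a` to `b`, whose edges all satisfy
`ok`. -/
structure GoodPath (G : Multigraph V E) (ok : E → Prop) (P : Finset E) (a b : V) :
    Prop where
  hab : a ≠ b
  hok : ∀ e ∈ P, ok e
  hdega : G.deg P a = 1
  hdegb : G.deg P b = 1
  hdeg2 : ∀ v, v ∈ G.vertsOf P → v ≠ a → v ≠ b → G.deg P v = 2
  hconn : ∀ v ∈ G.vertsOf P, G.ReachE P a v

lemma walkfix {P : Finset E} {e_c : E} {c c' : V}
    (huniq : ∀ f ∈ P, c ∈ G.ends f → f = e_c)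
    (hc' : G.ends e_c = s(c, c')) (hcc' : c' ≠ c)
    {v₂ : V} (hv2 : v₂ ≠ c) {u : V} (hwalk : G.ReachE P u v₂) :
    (u ≠ c → G.ReachE (P.erase e_c) u v₂) ∧
    (u = c → G.ReachE (P.erase e_c) c' v₂) := by
  induction hwalk using Relation.ReflTransGen.head_induction_on with
  | refl =>
    exact ⟨fun _ => Relation.ReflTransGen.refl, fun h => absurd h.symm (Ne.symm hv2)⟩
  | @head u u' hstep htail ih =>
    obtain ⟨e, heP, hu, hu'⟩ := hstep
    constructor
    · intro huc
      by_cases hf : e = e_c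
      · subst hf
        rw [hc', Sym2.mem_iff] at hu hu'
        have hu'' : u = c' := by tauto
        subst hu''
        rcases hu' with rfl | rfl
        · exact ih.2 rfl
        · exact ih.1 hcc'
      · have hu'c : u' ≠ c := by
          intro hh
          subst hh
          exact hf (huniq e heP hu')
        exact Relation.ReflTransGen.head
          ⟨e, Finset.mem_erase.mpr ⟨hf, heP⟩, hu, hu'⟩ (ih.1 hu'c)
    · intro huc
      subst huc
      have hf : e = e_c := huniq e heP hu
      subst hf
      rw [hc', Sym2.mem_iff] at hu'
      rcases hu' with rfl | rfl
      · exact ih.2 rfl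
      · exact ih.1 hcc'

lemma trunc {ok : E → Prop} :
    ∀ (n : ℕ) (P : Finset E), P.card = n → ∀ (c b a : V), GoodPath G ok P c b →
      a ∈ G.vertsOf P → a ≠ b → ∃ P', GoodPath G ok P' a b := by
  intro n
  induction n using Nat.strong_induction_on with
  | _ n ih =>
    intro P hn c b a gp haP hab
    by_cases hac : a = c
    · subst hac
      exact ⟨P, gp⟩
    -- the unique edge at c
    obtain ⟨e_c, hecP, hcec, hcnt, huniq⟩ := deg_one_unique gp.hdega
    obtain ⟨c', hc'⟩ := sym2_mem_exists hcec
    have hcc' : c' ≠ c := by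
      intro hh
      rw [hh] at hc'
      rw [hc', endCount_mk] at hcnt
      simp at hcnt
    have hbc : b ≠ c := Ne.symm gp.hab
    by_cases hc'b : c' = b
    · -- the path is the single edge e_c : contradiction with a ∈ verts
      exfalso
      obtain ⟨e_b, hebP, hbeb, _, huniqb⟩ := deg_one_unique gp.hdegb
      have hbec : b ∈ G.ends e_c := by
        rw [hc', ← hc'b]
        exact Sym2.mem_mk_right c c'
      have heb : e_b = e_c := (huniqb e_c hecP hbec).symm
      have hclose : ∀ v, G.ReachE P c v → v = c ∨ v = b := by
        intro v hv
        induction hv with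
        | refl => exact Or.inl rfl
        | @tail p q _ hstep ih2 =>
          obtain ⟨f, hfP, hp, hq⟩ := hstep
          have hfe : f = e_c := by
            rcases ih2 with rfl | rfl
            · exact huniq f hfP hp
            · exact (huniqb f hfP hp).trans heb
          subst hfe
          rw [hc', Sym2.mem_iff] at hq
          rcases hq with rfl | rfl
          · exact Or.inl rfl
          · exact Or.inr hc'b
      rcases hclose a (gp.hconn a haP) with rfl | rfl
      · exact hac rfl
      · exact hab rfl
    · -- remove e_c, yielding a good path from c' to b
      set P'' := P.erase e_c with hP''
      have hsub : P'' ⊆ P := Finset.erase_subset _ _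
      have hcP'' : ∀ f ∈ P'', c ∉ G.ends f := by
        intro f hf hcf
        have := huniq f (hsub hf) hcf
        subst this
        exact (Finset.mem_erase.mp hf).1 rfl
      have hdegc'' : G.deg P'' c = 0 := by
        by_contra hd
        obtain ⟨f, hf, hcf⟩ := exists_edge_of_deg_pos (by omega : 1 ≤ G.deg P'' c)
        exact hcP'' f hf hcf
      have hentc' : endCount (G.ends e_c) c' = 1 := by
        rw [hc', endCount_mk, if_neg (Ne.symm hcc'), if_pos rfl]
      have hc'verts : c' ∈ G.vertsOf P := by
        rw [mem_vertsOf]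
        exact ⟨e_c, hecP, by rw [hc']; exact Sym2.mem_mk_right c c'⟩
      have hdegPc' : G.deg P c' = 2 := gp.hdeg2 c' hc'verts hcc' hc'b
      have hdegc' : G.deg P'' c' = 1 := by
        have h := deg_erase (G := G) hecP c'
        rw [hdegPc', hentc', ← hP''] at h
        omega
      have hentb : endCount (G.ends e_c) b = 0 := by
        rw [hc', endCount_mk, if_neg (Ne.symm hbc), if_neg hc'b]
      have hdegb' : G.deg P'' b = 1 := by
        have h := deg_erase (G := G) hecP b
        rw [gp.hdegb, hentb, ← hP''] at h
        omega
      have hne_c : ∀ v, v ∈ G.vertsOf P'' → v ≠ c := by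
        intro v hv hh
        subst hh
        rw [verts_iff_deg, hdegc''] at hv
        omega
      have hgp'' : GoodPath G ok P'' c' b := by
        refine ⟨hc'b, fun f hf => gp.hok f (hsub hf), hdegc', hdegb', ?_, ?_⟩
        · intro v hv hvc' hvb
          have hvP : v ∈ G.vertsOf P := by
            rw [mem_vertsOf] at hv ⊢
            obtain ⟨f, hf, hvf⟩ := hv
            exact ⟨f, hsub hf, hvf⟩
          have hvc : v ≠ c := hne_c v hv
          have hd2 := gp.hdeg2 v hvP hvc hvb
          have hent : endCount (G.ends e_c) v = 0 := by
            rw [hc', endCount_mk, if_neg (fun hh => hvc hh.symm),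
              if_neg (fun hh => hvc' hh.symm)]
          have h := deg_erase (G := G) hecP v
          rw [hd2, hent, ← hP''] at h
          omega
        · intro v hv
          have hvP : v ∈ G.vertsOf P := by
            rw [mem_vertsOf] at hv ⊢
            obtain ⟨f, hf, hvf⟩ := hv
            exact ⟨f, hsub hf, hvf⟩
          have hvc : v ≠ c := hne_c v hv
          have hwalk := gp.hconn v hvP
          exact (walkfix huniq hc' hcc' hvc hwalk).2 rfl
      -- now recurse or finish
      by_cases hac' : a = c'
      · subst hac'
        exact ⟨P'', hgp''⟩
      · have haP'' : a ∈ G.vertsOf P'' := by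
          rw [mem_vertsOf] at haP ⊢
          obtain ⟨f, hf, haf⟩ := haP
          have hfec : f ≠ e_c := by
            intro hh
            subst hh
            rw [hc', Sym2.mem_iff] at haf
            rcases haf with rfl | rfl
            · exact hac rfl
            · exact hac' rfl
          exact ⟨f, Finset.mem_erase.mpr ⟨hfec, hf⟩, haf⟩
        have hcard : P''.card < n := by
          rw [← hn]
          exact Finset.card_erase_lt_of_mem hecP
        exact ih P''.card hcard P'' rfl c' b a hgp'' haP'' hab

lemma pathbuild {ok : E → Prop} {a b : V}
    (h : Relation.ReflTransGen
      (fun u v => ∃ e, ok e ∧ u ∈ G.ends e ∧ v ∈ G.ends e) a b)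
    (hab : a ≠ b) : ∃ P, GoodPath G ok P a b := by
  revert hab
  induction h using Relation.ReflTransGen.head_induction_on with
  | refl => exact fun h => absurd rfl h
  | @head u u' hstep htail ih =>
    intro hab
    obtain ⟨e, hoke, hu, hu'⟩ := hstep
    by_cases hu'b : u' = b
    · have hb : b ∈ G.ends e := hu'b ▸ hu'
      have hends : G.ends e = s(u, b) := sym2_eq_of_two_mem hab hu hb
      refine ⟨{e}, hab, ?_, ?_, ?_, ?_, ?_⟩
      · intro f hf
        rw [Finset.mem_singleton] at hf
        subst hf
        exact hoke
      · rw [deg_eq_sum, Finset.sum_singleton, hends, endCount_mk, if_pos rfl,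
          if_neg (Ne.symm hab)]
      · rw [deg_eq_sum, Finset.sum_singleton, hends, endCount_mk,
          if_neg hab, if_pos rfl]
      · intro v hv hva hvb
        exfalso
        rw [mem_vertsOf] at hv
        obtain ⟨f, hf, hvf⟩ := hv
        rw [Finset.mem_singleton] at hf
        subst hf
        rw [hends, Sym2.mem_iff] at hvf
        tauto
      · intro v hv
        rw [mem_vertsOf] at hv
        obtain ⟨f, hf, hvf⟩ := hv
        rw [Finset.mem_singleton] at hf
        exact reachE_step (Finset.mem_singleton_self e) hu (hf ▸ hvf)
    · obtain ⟨P, gp⟩ := ih hu'b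
      by_cases hav : u ∈ G.vertsOf P
      · -- truncate
        exact trunc P.card P rfl u' b u gp hav hab
      · -- extend
        have huu' : u ≠ u' := by
          intro hh
          subst hh
          exact hav (verts_iff_deg.mpr (le_of_eq gp.hdega.symm))
        have hends : G.ends e = s(u, u') := sym2_eq_of_two_mem huu' hu hu'
        have heP : e ∉ P := by
          intro hh
          exact hav (mem_vertsOf.mpr ⟨e, hh, hu⟩)
        have hdegu0 : G.deg P u = 0 := by
          by_contra hd
          exact hav (verts_iff_deg.mpr (by omega))
        have hub : u ≠ b := hab
        have hdegins : ∀ v, G.deg (insert e P) v = endCount (G.ends e) v + G.deg P v := by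
          intro v
          rw [deg_eq_sum, deg_eq_sum, Finset.sum_insert heP]
        refine ⟨insert e P, hub, ?_, ?_, ?_, ?_, ?_⟩
        · intro f hf
          rw [Finset.mem_insert] at hf
          rcases hf with rfl | hf
          · exact hoke
          · exact gp.hok f hf
        · rw [hdegins, hends, endCount_mk, if_pos rfl, if_neg (Ne.symm huu'),
            hdegu0]
        · have hbe : endCount (G.ends e) b = 0 := by
            rw [hends, endCount_mk, if_neg hub, if_neg hu'b]
          rw [hdegins, hbe, gp.hdegb]
        · intro v hv hvu hvb
          by_cases hvu' : v = u'
          · subst hvu'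
            rw [hdegins, hends, endCount_mk, if_neg huu', if_pos rfl, gp.hdega]
          · have hvP : v ∈ G.vertsOf P := by
              rw [mem_vertsOf] at hv ⊢
              obtain ⟨f, hf, hvf⟩ := hv
              rw [Finset.mem_insert] at hf
              rcases hf with rfl | hf
              · exfalso
                rw [hends, Sym2.mem_iff] at hvf
                tauto
              · exact ⟨f, hf, hvf⟩
            rw [hdegins]
            have hent : endCount (G.ends e) v = 0 := by
              rw [hends, endCount_mk, if_neg (fun hh => hvu hh.symm),
                if_neg (fun hh => hvu' hh.symm)]
            rw [hent, gp.hdeg2 v hvP hvu' hvb]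
        · intro v hv
          have hstep1 : G.ReachE (insert e P) u u' :=
            reachE_step (Finset.mem_insert_self e P) hu hu'
          rw [mem_vertsOf] at hv
          obtain ⟨f, hf, hvf⟩ := hv
          rw [Finset.mem_insert] at hf
          rcases hf with rfl | hf
          · rw [hends, Sym2.mem_iff] at hvf
            rcases hvf with rfl | rfl
            · exact Relation.ReflTransGen.refl
            · exact hstep1
          · have hvP : v ∈ G.vertsOf P := mem_vertsOf.mpr ⟨f, hf, hvf⟩
            exact hstep1.trans
              (reachE_mono (Finset.subset_insert e P) (gp.hconn v hvP))

end PathA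
end CTaux

namespace CTaux
open Multigraph Finset Fin.CommRing

section PropA2
variable {V E VH VΓ : Type} [Fintype V] [DecidableEq V] [Fintype E] [DecidableEq E]
  [Fintype VH] [DecidableEq VH] [Fintype VΓ] [DecidableEq VΓ] {k' : ℕ}
variable {G0 : Multigraph V E} {part : E → Fin (k' + 3)} {τ : V → Fin (k' + 3)}
  {x y z : Fin (k' + 3) → V} {H : Multigraph VH E} {fH : V → VH}
  {Γ : Multigraph VΓ E} {fΓ : V → VΓ}
  (S : Hyp G0 part τ x y z H fH Γ fΓ)

omit S in
lemma walk_convert {i : Fin (k' + 3)} {a b : V}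
    (h : Relation.ReflTransGen
      (fun a b => a ≠ z i ∧ b ≠ z i ∧ ∃ e, part e = i ∧ a ∈ G0.ends e ∧ b ∈ G0.ends e)
      a b) :
    Relation.ReflTransGen
      (fun u v => ∃ e, (part e = i ∧ z i ∉ G0.ends e) ∧ u ∈ G0.ends e ∧ v ∈ G0.ends e)
      a b := by
  induction h with
  | refl => exact Relation.ReflTransGen.refl
  | @tail p q _ hstep ih =>
    obtain ⟨hpz, hqz, e, hpe, hp, hq⟩ := hstep
    by_cases hpq : p = q
    · exact hpq ▸ ih
    · have hz : z i ∉ G0.ends e := by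
        intro hzmem
        have hends : G0.ends e = s(p, q) := sym2_eq_of_two_mem hpq hp hq
        rw [hends, Sym2.mem_iff] at hzmem
        rcases hzmem with h | h
        · exact hpz h.symm
        · exact hqz h.symm
      exact ih.tail ⟨e, ⟨hpe, hz⟩, hp, hq⟩

omit S in
lemma cast_mod_even (heven : Even (k' + 3)) (a : ℕ) :
    ((a % (k' + 3) : ℕ) : ZMod 2) = (a : ZMod 2) := by
  have hsplit : a % (k' + 3) + (k' + 3) * (a / (k' + 3)) = a := Nat.mod_add_div a (k' + 3)
  have hzero : ((k' + 3 : ℕ) : ZMod 2) = 0 := by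
    rw [ZMod.natCast_eq_zero_iff]
    exact even_iff_two_dvd.mp heven
  calc ((a % (k' + 3) : ℕ) : ZMod 2)
      = ((a % (k' + 3) : ℕ) : ZMod 2) + ((k' + 3 : ℕ) : ZMod 2) * ((a / (k' + 3) : ℕ) : ZMod 2) := by
        rw [hzero]; ring
    _ = ((a % (k' + 3) + (k' + 3) * (a / (k' + 3)) : ℕ) : ZMod 2) := by push_cast; ring
    _ = (a : ZMod 2) := by rw [hsplit]

omit S in
lemma pv1 (heven : Even (k' + 3)) (i : Fin (k' + 3)) :
    (((i + 1 : Fin (k' + 3)).val : ℕ) : ZMod 2) = ((i.val : ℕ) : ZMod 2) + 1 := by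
  have hv1 : (1 : Fin (k' + 3)).val = 1 := by
    rw [Fin.val_one']
    exact Nat.mod_eq_of_lt (by omega)
  rw [Fin.val_add, hv1, cast_mod_even heven]
  push_cast
  ring

omit S in
lemma pval (heven : Even (k' + 3)) (i : Fin (k' + 3)) :
    (((i - 1 : Fin (k' + 3)).val : ℕ) : ZMod 2) = (((i + 1 : Fin (k' + 3)).val : ℕ) : ZMod 2) := by
  have e1 := pv1 heven (i - 1)
  rw [sub_add_cancel] at e1
  have e2 := pv1 heven i
  rw [e2, e1]
  have h2 : (2 : ZMod 2) = 0 := rfl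
  calc ((i - 1 : Fin (k' + 3)).val : ZMod 2)
      = ((i - 1 : Fin (k' + 3)).val : ZMod 2) + 2 := by rw [h2]; ring
    _ = (((i - 1 : Fin (k' + 3)).val : ZMod 2) + 1) + 1 := by ring

include S

set_option maxHeartbeats 1000000 in
lemma propA (heven : Even (k' + 3))
    (hwalks : ∀ i : Fin (k' + 3), Relation.ReflTransGen
      (fun a b => a ≠ z i ∧ b ≠ z i ∧ ∃ e, part e = i ∧ a ∈ G0.ends e ∧ b ∈ G0.ends e)
      (x i) (y i)) :
    ∃ C : Finset E, H.IsCycle C ∧ ¬ Γ.ConnectedOn C := by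
  have hpaths : ∀ i : Fin (k' + 3), ∃ P, GoodPath G0
      (fun e => part e = i ∧ z i ∉ G0.ends e) P (x i) (y i) :=
    fun i => pathbuild (walk_convert (hwalks i)) (S.hxy i)
  choose P hP using hpaths
  set C : Finset E := univ.biUnion P with hCdef
  have hmemC : ∀ i, P i ⊆ C := fun i =>
    Finset.subset_biUnion_of_mem P (Finset.mem_univ i)
  have hpart : ∀ i, ∀ e ∈ P i, part e = i := fun i e he => ((hP i).hok e he).1
  have hznot : ∀ i, ∀ e ∈ P i, z i ∉ G0.ends e := fun i e he => ((hP i).hok e he).2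
  have hdisj : (↑(univ : Finset (Fin (k' + 3))) : Set (Fin (k' + 3))).PairwiseDisjoint P := by
    intro i _ j _ hij
    show Disjoint (P i) (P j)
    rw [Finset.disjoint_left]
    intro e hei hej
    exact hij ((hpart i e hei).symm.trans (hpart j e hej))
  have hvertpart : ∀ i, ∀ v ∈ G0.vertsOf (P i), τ v = i := by
    intro i v hv
    obtain ⟨e, he, hve⟩ := mem_vertsOf.mp hv
    rw [S.hτ e v hve, hpart i e he]
  have hdeg_other : ∀ i (v : V), τ v ≠ i → G0.deg (P i) v = 0 := by
    intro i v hvi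
    by_contra hd
    exact hvi (hvertpart i v (verts_iff_deg.mpr (by omega)))
  have hdegCv : ∀ v : V, G0.deg C v = G0.deg (P (τ v)) v := by
    intro v
    have h1 : G0.deg C v = ∑ i, G0.deg (P i) v := by
      rw [deg_eq_sum, hCdef, Finset.sum_biUnion hdisj]
      exact Finset.sum_congr rfl fun i _ => (deg_eq_sum _ _).symm
    rw [h1]
    exact Finset.sum_eq_single (τ v)
      (fun i _ hi => hdeg_other i v (fun hh => hi hh.symm))
      (fun h => absurd (Finset.mem_univ (τ v)) h)
  have hxdeg : ∀ i, G0.deg C (x i) = 1 := by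
    intro i
    rw [hdegCv, S.hτx]
    exact (hP i).hdega
  have hydeg : ∀ i, G0.deg C (y i) = 1 := by
    intro i
    rw [hdegCv, S.hτy]
    exact (hP i).hdegb
  have hzverts : ∀ j (e : E), e ∈ C → z j ∉ G0.ends e := by
    intro j e heC hze
    obtain ⟨i, _, hei⟩ := Finset.mem_biUnion.mp heC
    have : τ (z j) = i := by rw [S.hτ e _ hze, hpart i e hei]
    rw [S.hτz] at this
    subst this
    exact hznot j e hei hze
  have hzdeg : ∀ j, G0.deg C (z j) = 0 := by
    intro j
    by_contra hd
    obtain ⟨e, heC, hze⟩ := exists_edge_of_deg_pos (by omega : 1 ≤ G0.deg C (z j))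
    exact hzverts j e heC hze
  -- C is a cycle of H
  have hCcycle : H.IsCycle C := by
    refine ⟨?_, ?_, ?_⟩
    · -- nonempty
      obtain ⟨e, he, _⟩ := exists_edge_of_deg_pos
        (le_of_eq ((hP 0).hdega).symm)
      exact ⟨e, hmemC 0 he⟩
    · -- connected
      have hreachPart : ∀ i, ∀ v ∈ G0.vertsOf (P i), H.ReachE C (fH (x i)) (fH v) := by
        intro i v hv
        exact reachE_map S.hHends (reachE_mono (hmemC i) ((hP i).hconn v hv))
      have hyvert : ∀ i, y i ∈ G0.vertsOf (P i) := fun i =>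
        verts_iff_deg.mpr (le_of_eq ((hP i).hdegb).symm)
      have hxvert : ∀ i, x i ∈ G0.vertsOf (P i) := fun i =>
        verts_iff_deg.mpr (le_of_eq ((hP i).hdega).symm)
      have hstep1 : ∀ j : Fin (k' + 3), H.ReachE C (fH (x j)) (fH (x (j + 1))) := by
        intro j
        have h1 := hreachPart j (y j) (hyvert j)
        rwa [fH_y_x S j] at h1
      have hring : ∀ m : ℕ, H.ReachE C (fH (x 0)) (fH (x ((m : ℕ) : Fin (k' + 3)))) := by
        intro m
        induction m with
        | zero => simp only [Nat.cast_zero]; exact Relation.ReflTransGen.refl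
        | succ m ih =>
          have hc : ((m + 1 : ℕ) : Fin (k' + 3)) = ((m : ℕ) : Fin (k' + 3)) + 1 := by
            push_cast; ring
          rw [hc]
          exact ih.trans (hstep1 _)
      have hxall : ∀ i, H.ReachE C (fH (x 0)) (fH (x i)) := by
        intro i
        have := hring i.val
        rwa [Fin.cast_val_eq_self] at this
      have hkey : ∀ u ∈ H.vertsOf C, H.ReachE C (fH (x 0)) u := by
        intro u hu
        obtain ⟨e, heC, hue⟩ := mem_vertsOf.mp hu
        rw [S.hHends, Sym2.mem_map] at hue
        obtain ⟨v, hv, rfl⟩ := hue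
        obtain ⟨i, _, hei⟩ := Finset.mem_biUnion.mp heC
        have hvP : v ∈ G0.vertsOf (P i) := mem_vertsOf.mpr ⟨e, hei, hv⟩
        exact (hxall i).trans (hreachPart i v hvP)
      intro u hu w hw
      exact (reachE_symm (hkey u hu)).trans (hkey w hw)
    · -- degree two everywhere
      intro w hw
      obtain ⟨e, heC, hue⟩ := mem_vertsOf.mp hw
      rw [S.hHends, Sym2.mem_map] at hue
      obtain ⟨v, hv, rfl⟩ := hue
      obtain ⟨i, _, hei⟩ := Finset.mem_biUnion.mp heC
      have hτv : τ v = i := by rw [S.hτ e v hv, hpart i e hei]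
      by_cases hxs : ∃ j, v = x j
      · obtain ⟨j, rfl⟩ := hxs
        rw [degH_x S j, hxdeg, hydeg]
      · by_cases hys : ∃ j, v = y j
        · obtain ⟨j, rfl⟩ := hys
          rw [fH_y_x S j, degH_x S (j + 1), hxdeg, add_sub_cancel_right, hydeg]
        · by_cases hzs : ∃ j, v = z j
          · obtain ⟨j, rfl⟩ := hzs
            exact absurd hv (hzverts j e heC)
          · push_neg at hxs hys hzs
            have hns : NonSpec x y z v := fun j => ⟨hxs j, hys j, hzs j⟩
            rw [degH_ns S hns, hdegCv, hτv]
            apply (hP i).hdeg2 v (mem_vertsOf.mpr ⟨e, hei, hv⟩)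
            · intro hh; exact hxs i hh
            · intro hh; exact hys i hh
  -- C is not connected in Γ
  refine ⟨C, hCcycle, ?_⟩
  intro hconn
  set φ : V → ZMod 2 := fun v => ((τ v).val : ZMod 2) with hφ
  have hφedge : ∀ e ∈ C, ∀ a b : V, a ∈ G0.ends e → b ∈ G0.ends e → φ a = φ b := by
    intro e heC a b ha hb
    rw [hφ]
    simp only
    rw [S.hτ e a ha, S.hτ e b hb]
  have hvertsC : ∀ v : V, v ∈ G0.vertsOf C → ∀ j, v ≠ z j := by
    intro v hv j hh
    subst hh
    obtain ⟨e, heC, hve⟩ := mem_vertsOf.mp hv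
    exact hzverts j e heC hve
  have hφΓ : ∀ a b : V, a ∈ G0.vertsOf C → b ∈ G0.vertsOf C → fΓ a = fΓ b →
      φ a = φ b := by
    intro a b haC hbC hab
    rcases fΓ_class S hab with rfl | ⟨i, ha, hb⟩
    · rfl
    · have hφval : ∀ c : V, c ∈ G0.vertsOf C →
          (c = y (i - 1) ∨ c = z i ∨ c = x (i + 1)) →
          φ c = (((i - 1 : Fin (k' + 3)).val : ℕ) : ZMod 2) := by
        intro c hcC hc
        rcases hc with rfl | rfl | rfl
        · rw [hφ]; simp only; rw [S.hτy]
        · exact absurd rfl (hvertsC _ hcC i)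
        · rw [hφ]; simp only; rw [S.hτx]
          exact (pval heven i).symm
      rw [hφval a haC ha, hφval b hbC hb]
  have hx1vert : x 1 ∈ G0.vertsOf C :=
    verts_iff_deg.mpr (le_of_eq (hxdeg 1).symm)
  have hx2vert : x 2 ∈ G0.vertsOf C :=
    verts_iff_deg.mpr (le_of_eq (hxdeg 2).symm)
  have hinv : ∀ q, Γ.ReachE C (fΓ (x 1)) q →
      ∃ a, a ∈ G0.vertsOf C ∧ fΓ a = q ∧ φ a = φ (x 1) := by
    intro q hq
    induction hq with
    | refl => exact ⟨x 1, hx1vert, rfl, rfl⟩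
    | @tail p q _ hstep ih =>
      obtain ⟨e, heC, hpe, hqe⟩ := hstep
      obtain ⟨a, haC, hfa, hφa⟩ := ih
      rw [S.hΓends, Sym2.mem_map] at hpe hqe
      obtain ⟨c, hc, hfc⟩ := hpe
      obtain ⟨d, hd, hfd⟩ := hqe
      have hcC : c ∈ G0.vertsOf C := mem_vertsOf.mpr ⟨e, heC, hc⟩
      have hdC : d ∈ G0.vertsOf C := mem_vertsOf.mpr ⟨e, heC, hd⟩
      have h1 : φ a = φ c := hφΓ a c haC hcC (hfa.trans hfc.symm)
      have h2 : φ c = φ d := hφedge e heC c d hc hd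
      exact ⟨d, hdC, hfd, (h2.symm.trans h1.symm).trans hφa⟩
  have hverts1 : fΓ (x 1) ∈ Γ.vertsOf C := by
    obtain ⟨e, he, hve⟩ := mem_vertsOf.mp hx1vert
    exact (mem_vertsΓ S).mpr ⟨e, he, x 1, hve, rfl⟩
  have hverts2 : fΓ (x 2) ∈ Γ.vertsOf C := by
    obtain ⟨e, he, hve⟩ := mem_vertsOf.mp hx2vert
    exact (mem_vertsΓ S).mpr ⟨e, he, x 2, hve, rfl⟩
  have hreach := hconn _ hverts1 _ hverts2
  obtain ⟨a, haC, hfa, hφa⟩ := hinv _ hreach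
  have hfin : φ (x 1) = φ (x 2) :=
    hφa.symm.trans (hφΓ a (x 2) haC hx2vert hfa)
  rw [hφ] at hfin
  simp only at hfin
  rw [S.hτx, S.hτx] at hfin
  have h01 : (1 : Fin (k' + 3)) = 0 + 1 := by ring
  have h02 : (2 : Fin (k' + 3)) = (0 + 1) + 1 := by ring
  rw [h01, h02, pv1 heven, pv1 heven, pv1 heven] at hfin
  exact one_ne_zero (left_eq_add.mp hfin)

end PropA2
end CTaux

/-- For a consecutive twisting with `k` parts, with `G`
2-connected and `M(G) = L(Ω)`: every cycle of `H` is connected in `Γ` iff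
(`k` odd, or) for some `i` no path joins `x i` and `y i` in `H_i \ z i`
when `k` is even. -/
theorem consecutive_twisting_connected_iff
    {VH VΓ W : Type} [Fintype VH] [DecidableEq VH] [Fintype VΓ] [DecidableEq VΓ]
    [Fintype W] [DecidableEq W]
    (G0 : Multigraph V E) (k : ℕ) (hk : 3 ≤ k)
    (part : E → Fin k) (τ : V → Fin k)
    (hτ : ∀ e, ∀ u : V, u ∈ G0.ends e → τ u = part e)
    (x y z : Fin k → V)
    (hτx : ∀ i, τ (x i) = i) (hτy : ∀ i, τ (y i) = i) (hτz : ∀ i, τ (z i) = i)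
    (hxy : ∀ i, x i ≠ y i) (hxz : ∀ i, x i ≠ z i) (hyz : ∀ i, y i ≠ z i)
    (H : Multigraph VH E) (fH : V → VH)
    (hfH : ∀ u u', fH u = fH u' ↔ (u = u' ∨ (∃ i j, u = z i ∧ u' = z j) ∨
      ∃ i : Fin k, (u = y (i - ⟨1, by omega⟩) ∧ u' = x i) ∨
        (u = x i ∧ u' = y (i - ⟨1, by omega⟩))))
    (hHends : ∀ e, H.ends e = Sym2.map fH (G0.ends e))
    (Γ : Multigraph VΓ E) (fΓ : V → VΓ)
    (hfΓ : ∀ u u', fΓ u = fΓ u' ↔ (u = u' ∨ ∃ i : Fin k,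
      u ∈ ({y (i - ⟨1, by omega⟩), z i, x (i + ⟨1, by omega⟩)} : Set V) ∧
      u' ∈ ({y (i - ⟨1, by omega⟩), z i, x (i + ⟨1, by omega⟩)} : Set V)))
    (hΓends : ∀ e, Γ.ends e = Sym2.map fΓ (G0.ends e))
    (σ : E → ℤˣ)
    (hσ : ∀ e, σ e = if y ⟨0, by omega⟩ ∈ G0.ends e ∨ x ⟨1, by omega⟩ ∈ G0.ends e
      then -1 else 1)
    (G : Multigraph W E) (hG2 : G.TwoConnected)
    (hML : ∀ C : Finset E, Γ.LiftCircuit σ C ↔ G.IsCycle C)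
 :
    (∀ C : Finset E, H.IsCycle C → Γ.ConnectedOn C) ↔
      (Even k → ∃ i : Fin k, ¬ Relation.ReflTransGen
        (fun a b => a ≠ z i ∧ b ≠ z i ∧ ∃ e, part e = i ∧ a ∈ G0.ends e ∧ b ∈ G0.ends e)
        (x i) (y i)) := by
  obtain ⟨k'', rfl⟩ : ∃ k'', k = k'' + 3 := ⟨k - 3, by omega⟩
  have hone : ∀ p : 1 < k'' + 3, (⟨1, p⟩ : Fin (k'' + 3)) = 1 := by
    intro p
    apply Fin.ext
    rw [Fin.val_one']
    exact (Nat.mod_eq_of_lt (by omega)).symm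
  simp only [hone] at hfH hfΓ
  have S : CTaux.Hyp G0 part τ x y z H fH Γ fΓ :=
    ⟨hτ, hτx, hτy, hτz, hxy, hxz, hyz, hfH, hHends, hfΓ, hΓends⟩
  constructor
  · intro hAll heven'
    by_contra hno
    push_neg at hno
    obtain ⟨C, hC, hnc⟩ := CTaux.propA S heven' hno
    exact hnc (hAll C hC)
  · intro hside C hC
    rcases CTaux.propB S hC with h | ⟨heven', hall⟩
    · exact h
    · obtain ⟨i, hni⟩ := hside heven'
      exact absurd (hall i) hni
end

section
/- A signed graph Ω has no two vertex-disjoint unbalanced cycles if and only if its frame matroid equals its lift matroid: F(Ω) = L(Ω). -/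
namespace Multigraph

variable {V E : Type} [Fintype V] [DecidableEq V] [Fintype E] [DecidableEq E]

section AuxLemmas
set_option linter.unusedSectionVars false

lemma mem_vertsOf {G : Multigraph V E} {C : Finset E} {v : V} :
    v ∈ G.vertsOf C ↔ ∃ e ∈ C, v ∈ G.ends e := by
  simp [vertsOf]

lemma vertsOf_union {G : Multigraph V E} {C D : Finset E} :
    G.vertsOf (C ∪ D) = G.vertsOf C ∪ G.vertsOf D := by
  ext v
  simp only [mem_vertsOf, Finset.mem_union]
  constructor
  · rintro ⟨e, he | he, hv⟩
    · exact Or.inl ⟨e, he, hv⟩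
    · exact Or.inr ⟨e, he, hv⟩
  · rintro (⟨e, he, hv⟩ | ⟨e, he, hv⟩)
    · exact ⟨e, Or.inl he, hv⟩
    · exact ⟨e, Or.inr he, hv⟩

lemma deg_eq_zero {G : Multigraph V E} {C : Finset E} {v : V} (h : v ∉ G.vertsOf C) :
    G.deg C v = 0 := by
  refine Finset.sum_eq_zero fun e he => ?_
  have hv : v ∉ G.ends e := fun hv => h (mem_vertsOf.2 ⟨e, he, hv⟩)
  have hdg : G.ends e ≠ Sym2.diag v := by
    intro hdg; exact hv (by rw [hdg]; simp [Sym2.diag])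
  rw [if_neg hdg, if_neg hv]

lemma deg_union {G : Multigraph V E} {C D : Finset E} (h : Disjoint C D) (v : V) :
    G.deg (C ∪ D) v = G.deg C v + G.deg D v := Finset.sum_union h

lemma ReachE.mono' {G : Multigraph V E} {C D : Finset E} {u w : V} (h : C ⊆ D)
    (hr : G.ReachE C u w) : G.ReachE D u w :=
  Relation.ReflTransGen.mono (r := fun a b => ∃ e ∈ C, a ∈ G.ends e ∧ b ∈ G.ends e)
    (p := fun a b => ∃ e ∈ D, a ∈ G.ends e ∧ b ∈ G.ends e)
    (fun _ _ ⟨e, he, h1, h2⟩ => ⟨e, h he, h1, h2⟩) _ _ hr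

lemma ReachE.symm' {G : Multigraph V E} {C : Finset E} {u w : V}
    (hr : G.ReachE C u w) : G.ReachE C w u :=
  (@Relation.ReflTransGen.stdSymm _ (fun a b => ∃ e ∈ C, a ∈ G.ends e ∧ b ∈ G.ends e)
    ⟨fun _ _ ⟨e, he, h1, h2⟩ => ⟨e, he, h2, h1⟩⟩).symm _ _ hr

lemma ReachE.trans' {G : Multigraph V E} {C : Finset E} {u w x : V}
    (h1 : G.ReachE C u w) (h2 : G.ReachE C w x) : G.ReachE C u x :=
  Relation.ReflTransGen.trans h1 h2

lemma edgeDisjoint_of_vertsDisjoint {G : Multigraph V E} {C₁ C₂ : Finset E}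
    (hd : Disjoint (G.vertsOf C₁) (G.vertsOf C₂)) : Disjoint C₁ C₂ := by
  rw [Finset.disjoint_left] at hd ⊢
  intro e h1 h2
  exact hd (mem_vertsOf.2 ⟨e, h1, Sym2.out_fst_mem _⟩)
    (mem_vertsOf.2 ⟨e, h2, Sym2.out_fst_mem _⟩)

lemma deg_pair {G : Multigraph V E} {C₁ C₂ : Finset E} {v : V}
    (h₁ : G.IsCycle C₁) (h₂ : G.IsCycle C₂)
    (hd : Disjoint (G.vertsOf C₁) (G.vertsOf C₂))
    (hv : v ∈ G.vertsOf (C₁ ∪ C₂)) : G.deg (C₁ ∪ C₂) v = 2 := by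
  rw [deg_union (edgeDisjoint_of_vertsDisjoint hd)]
  rw [vertsOf_union, Finset.mem_union] at hv
  rcases hv with hv | hv
  · rw [h₁.2.2 v hv, deg_eq_zero (Finset.disjoint_left.1 hd hv)]
  · rw [h₂.2.2 v hv, deg_eq_zero (Finset.disjoint_right.1 hd hv)]

lemma not_connected_pair {G : Multigraph V E} {C₁ C₂ : Finset E}
    (h₁ : G.IsCycle C₁) (h₂ : G.IsCycle C₂)
    (hd : Disjoint (G.vertsOf C₁) (G.vertsOf C₂)) : ¬ G.ConnectedOn (C₁ ∪ C₂) := by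
  intro hc
  obtain ⟨e₁, he₁⟩ := h₁.1
  obtain ⟨e₂, he₂⟩ := h₂.1
  have ha : (G.ends e₁).out.1 ∈ G.vertsOf C₁ := mem_vertsOf.2 ⟨e₁, he₁, Sym2.out_fst_mem _⟩
  have hb : (G.ends e₂).out.1 ∈ G.vertsOf C₂ := mem_vertsOf.2 ⟨e₂, he₂, Sym2.out_fst_mem _⟩
  have hr := hc _ (by rw [vertsOf_union]; exact Finset.mem_union_left _ ha) _
    (by rw [vertsOf_union]; exact Finset.mem_union_right _ hb)
  have key : ∀ x, G.ReachE (C₁ ∪ C₂) (G.ends e₁).out.1 x → x ∈ G.vertsOf C₁ := by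
    intro x hx
    induction hx with
    | refl => exact ha
    | tail _ hstep ih =>
      obtain ⟨e, he, hm1, hm2⟩ := hstep
      rcases Finset.mem_union.1 he with he | he
      · exact mem_vertsOf.2 ⟨e, he, hm2⟩
      · exact absurd (mem_vertsOf.2 ⟨e, he, hm1⟩) (Finset.disjoint_left.1 hd ih)
  exact Finset.disjoint_left.1 hd (key _ hr) hb

lemma paths_union_isCycle {G : Multigraph V E} {P₁ P₂ : Finset E} {u w : V}
    (h₁ : G.IsPath P₁ u w) (h₂ : G.IsPath P₂ u w) (hd : Disjoint P₁ P₂)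
    (hv : G.vertsOf P₁ ∩ G.vertsOf P₂ = {u, w}) : G.IsCycle (P₁ ∪ P₂) := by
  obtain ⟨hne, hc1, hu1, hw1, hdu1, hdw1, hmid1⟩ := h₁
  obtain ⟨_, hc2, hu2, hw2, hdu2, hdw2, hmid2⟩ := h₂
  refine ⟨?_, ?_, ?_⟩
  · obtain ⟨e, he, _⟩ := mem_vertsOf.1 hu1
    exact ⟨e, Finset.mem_union_left _ he⟩
  · have key : ∀ x ∈ G.vertsOf (P₁ ∪ P₂), G.ReachE (P₁ ∪ P₂) x u := by
      intro x hx
      rw [vertsOf_union, Finset.mem_union] at hx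
      rcases hx with hx | hx
      · exact (hc1 x hx u hu1).mono' Finset.subset_union_left
      · exact (hc2 x hx u hu2).mono' Finset.subset_union_right
    intro a ha b hb
    exact (key a ha).trans' (key b hb).symm'
  · intro v hvv
    rw [vertsOf_union, Finset.mem_union] at hvv
    rw [deg_union hd]
    by_cases hv1 : v ∈ G.vertsOf P₁ <;> by_cases hv2 : v ∈ G.vertsOf P₂
    · have : v ∈ ({u, w} : Finset V) := hv ▸ Finset.mem_inter.2 ⟨hv1, hv2⟩
      rcases Finset.mem_insert.1 this with rfl | h
      · rw [hdu1, hdu2]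
      · rw [Finset.mem_singleton.1 h, hdw1, hdw2]
    · have hvu : v ≠ u := fun h => hv2 (h ▸ hu2)
      have hvw : v ≠ w := fun h => hv2 (h ▸ hw2)
      rw [hmid1 v hv1 hvu hvw, deg_eq_zero hv2]
    · have hvu : v ≠ u := fun h => hv1 (h ▸ hu1)
      have hvw : v ≠ w := fun h => hv1 (h ▸ hw1)
      rw [hmid2 v hv2 hvu hvw, deg_eq_zero hv1]
    · exact absurd hvv (by simp [hv1, hv2])

end AuxLemmas

end Multigraph

variable {V E : Type} [Fintype V] [DecidableEq V] [Fintype E] [DecidableEq E]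


/-- A signed graph has no two vertex-disjoint unbalanced cycles
iff its frame matroid equals its lift matroid. -/
theorem frame_eq_lift_iff (Γ : Multigraph V E) (σ : E → ℤˣ) :
    (¬ ∃ C₁ C₂ : Finset E, Γ.IsCycle C₁ ∧ Γ.IsCycle C₂ ∧
        (∏ e ∈ C₁, σ e) ≠ 1 ∧ (∏ e ∈ C₂, σ e) ≠ 1 ∧
        Disjoint (Γ.vertsOf C₁) (Γ.vertsOf C₂)) ↔
      (∀ C : Finset E, Γ.SFrameCircuit σ C ↔ Γ.LiftCircuit σ C) := by
  constructor
  · intro hn C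
    have unbal : ∀ D : Finset E, Γ.IsCycle D → D ∉ Γ.balancedCycles σ →
        (∏ e ∈ D, σ e) = -1 := by
      intro D hD hnB
      rcases Int.units_eq_one_or (∏ e ∈ D, σ e) with h | h
      · exact absurd ⟨hD, h⟩ hnB
      · exact h
    constructor
    · intro h
      unfold Multigraph.SFrameCircuit Multigraph.FrameCircuit at h
      rcases h with ⟨hcyc, hB⟩ | ⟨C₁, C₂, ⟨hc1, hc2, hdE, hcard⟩, hb1, hb2, rfl⟩ |
        ⟨C₁, C₂, P, hLH, hb1, hb2, rfl⟩ | ⟨⟨u, w, P₁, P₂, P₃, hTD, rfl⟩, hall⟩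
      · exact Or.inl ⟨hcyc, hB.2⟩
      · exact Or.inr ⟨C₁, C₂, hc1, hc2, unbal _ hc1 hb1, unbal _ hc2 hb2, hdE,
          le_of_eq hcard, rfl⟩
      · obtain ⟨hc1, hc2, hdV, _⟩ := hLH
        exact (hn ⟨C₁, C₂, hc1, hc2, by rw [unbal _ hc1 hb1]; decide,
          by rw [unbal _ hc2 hb2]; decide, hdV⟩).elim
      · exfalso
        obtain ⟨hp1, hp2, hp3, hd12, hd13, hd23, hv12, hv13, hv23⟩ := hTD
        have K12 := Multigraph.paths_union_isCycle hp1 hp2 hd12 hv12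
        have K13 := Multigraph.paths_union_isCycle hp1 hp3 hd13 hv13
        have K23 := Multigraph.paths_union_isCycle hp2 hp3 hd23 hv23
        have s12 : P₁ ∪ P₂ ⊆ P₁ ∪ P₂ ∪ P₃ := Finset.subset_union_left
        have s13 : P₁ ∪ P₃ ⊆ P₁ ∪ P₂ ∪ P₃ :=
          Finset.union_subset (Finset.subset_union_left.trans Finset.subset_union_left)
            Finset.subset_union_right
        have s23 : P₂ ∪ P₃ ⊆ P₁ ∪ P₂ ∪ P₃ :=
          Finset.union_subset (Finset.subset_union_right.trans Finset.subset_union_left)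
            Finset.subset_union_right
        have q12 := Finset.prod_union (f := σ) hd12
        have q13 := Finset.prod_union (f := σ) hd13
        have q23 := Finset.prod_union (f := σ) hd23
        rcases Int.units_eq_one_or (∏ e ∈ P₁, σ e) with h1 | h1 <;>
          rcases Int.units_eq_one_or (∏ e ∈ P₂, σ e) with h2 | h2 <;>
          rcases Int.units_eq_one_or (∏ e ∈ P₃, σ e) with h3 | h3
        · exact hall _ s12 K12 ⟨K12, by rw [q12, h1, h2]; decide⟩
        · exact hall _ s12 K12 ⟨K12, by rw [q12, h1, h2]; decide⟩
        · exact hall _ s13 K13 ⟨K13, by rw [q13, h1, h3]; decide⟩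
        · exact hall _ s23 K23 ⟨K23, by rw [q23, h2, h3]; decide⟩
        · exact hall _ s23 K23 ⟨K23, by rw [q23, h2, h3]; decide⟩
        · exact hall _ s13 K13 ⟨K13, by rw [q13, h1, h3]; decide⟩
        · exact hall _ s12 K12 ⟨K12, by rw [q12, h1, h2]; decide⟩
        · exact hall _ s12 K12 ⟨K12, by rw [q12, h1, h2]; decide⟩
    · intro h
      unfold Multigraph.LiftCircuit at h
      rcases h with ⟨hcyc, hprod⟩ | ⟨C₁, C₂, hc1, hc2, hq1, hq2, hdE, hcard, rfl⟩
      · exact Or.inl ⟨hcyc, hcyc, hprod⟩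
      · have hb1 : C₁ ∉ Γ.balancedCycles σ := fun hB => by
          rw [hB.2] at hq1; exact absurd hq1 (by decide)
        have hb2 : C₂ ∉ Γ.balancedCycles σ := fun hB => by
          rw [hB.2] at hq2; exact absurd hq2 (by decide)
        rcases Nat.le_one_iff_eq_zero_or_eq_one.1 hcard with h0 | h1
        · exact (hn ⟨C₁, C₂, hc1, hc2, by rw [hq1]; decide, by rw [hq2]; decide,
            Finset.disjoint_iff_inter_eq_empty.2 (Finset.card_eq_zero.1 h0)⟩).elim
        · exact Or.inr (Or.inl ⟨C₁, C₂, ⟨hc1, hc2, hdE, h1⟩, hb1, hb2, rfl⟩)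
  · rintro h ⟨C₁, C₂, hc1, hc2, hu1, hu2, hdV⟩
    have hdE := Multigraph.edgeDisjoint_of_vertsDisjoint hdV
    have hp1 := (Int.units_eq_one_or (∏ e ∈ C₁, σ e)).resolve_left hu1
    have hp2 := (Int.units_eq_one_or (∏ e ∈ C₂, σ e)).resolve_left hu2
    have hcap : Γ.vertsOf C₁ ∩ Γ.vertsOf C₂ = ∅ := Finset.disjoint_iff_inter_eq_empty.1 hdV
    have hlift : Γ.LiftCircuit σ (C₁ ∪ C₂) :=
      Or.inr ⟨C₁, C₂, hc1, hc2, hp1, hp2, hdE, by rw [hcap]; simp, rfl⟩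
    have hframe := (h _).2 hlift
    unfold Multigraph.SFrameCircuit Multigraph.FrameCircuit at hframe
    rcases hframe with ⟨hcyc, _⟩ | ⟨D₁, D₂, ⟨hd1, hd2, hdd, hcard⟩, _, _, hEq⟩ |
      ⟨D₁, D₂, P, ⟨hd1, hd2, hVdd, hPD1, hPD2, u₁, u₂, hPath, hu₁, hu₂, _, _⟩, _, _, hEq⟩ |
      ⟨⟨u, w, P₁, P₂, P₃, ⟨hq1, hq2, hq3, hdd12, hdd13, hdd23, _, _, _⟩, hEq⟩, _⟩
    · exact Multigraph.not_connected_pair hc1 hc2 hdV hcyc.2.1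
    · obtain ⟨v, hv⟩ := Finset.card_eq_one.1 hcard
      have hvm : v ∈ Γ.vertsOf D₁ ∩ Γ.vertsOf D₂ := hv ▸ Finset.mem_singleton_self v
      have hv1 := (Finset.mem_inter.1 hvm).1
      have hv2 := (Finset.mem_inter.1 hvm).2
      have hvC : v ∈ Γ.vertsOf (C₁ ∪ C₂) := by
        rw [hEq, Multigraph.vertsOf_union]; exact Finset.mem_union_left _ hv1
      have h2 := Multigraph.deg_pair hc1 hc2 hdV hvC
      rw [hEq, Multigraph.deg_union hdd, hd1.2.2 v hv1, hd2.2.2 v hv2] at h2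
      omega
    · have hddE : Disjoint D₁ D₂ := Multigraph.edgeDisjoint_of_vertsDisjoint hVdd
      have hvC : u₁ ∈ Γ.vertsOf (C₁ ∪ C₂) := by
        rw [hEq, Multigraph.vertsOf_union, Multigraph.vertsOf_union]
        exact Finset.mem_union_left _ (Finset.mem_union_left _ hu₁)
      have h2 := Multigraph.deg_pair hc1 hc2 hdV hvC
      have hdisj : Disjoint (D₁ ∪ D₂) P :=
        Finset.disjoint_union_left.2 ⟨hPD1.symm, hPD2.symm⟩
      rw [hEq, Multigraph.deg_union hdisj, Multigraph.deg_union hddE,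
        hd1.2.2 u₁ hu₁, Multigraph.deg_eq_zero (Finset.disjoint_left.1 hVdd hu₁),
        hPath.2.2.2.2.1] at h2
      omega
    · have hvC : u ∈ Γ.vertsOf (C₁ ∪ C₂) := by
        rw [hEq, Multigraph.vertsOf_union, Multigraph.vertsOf_union]
        exact Finset.mem_union_left _ (Finset.mem_union_left _ hq1.2.2.1)
      have h2 := Multigraph.deg_pair hc1 hc2 hdV hvC
      have hdisj : Disjoint (P₁ ∪ P₂) P₃ := Finset.disjoint_union_left.2 ⟨hdd13, hdd23⟩
      rw [hEq, Multigraph.deg_union hdisj, Multigraph.deg_union hdd12,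
        hq1.2.2.2.2.1, hq2.2.2.2.2.1, hq3.2.2.2.2.1] at h2
      omega
end
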